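/- Let P = B ∪ R be a doubly collinear point set with |B| = |R| = n ≥ 1. Then there exists a bichromatic perfect non-crossing matching M of P that minimizes the maximum edge length among all bichromatic perfect non-crossing matchings of P and has the following form: for each of the four half-lines h, the set of points of P ∩ h whose matching edge in M lies in a small sector is consecutive in the ordering of P ∩ h by distance to x. -/

import Mathlib

noncomputable section

open scoped InnerProductSpace

/-- The Euclidean plane. -/
abbrev Pt : Type := EuclideanSpace ℝ (Fin 2)

/-- The determinant of two plane vectors (twice the signed area). -/
def det2 (u v : Pt) : ℝ := u 0 * v 1 - u 1 * v 0

/-- The open half-line starting at `x` with direction `u`. -/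
def halfLine (x u : Pt) : Set Pt := {y | ∃ t : ℝ, 0 < t ∧ y = x + t • u}

/-- The open half-line starting at `a` and passing through `c` (it contains `c`). -/
def rayThrough (a c : Pt) : Set Pt := {y | ∃ s : ℝ, 0 < s ∧ y = a + s • (c - a)}

/-- `σ` encodes a bichromatic perfect non-crossing matching of the blue points `B` and the red
points `R`: it restricts to a bijection from `R` onto `B`, and the closed segments induced by
two distinct edges are disjoint. -/
def IsBM (B R : Finset Pt) (σ : Pt → Pt) : Prop :=
  Set.BijOn σ (↑R) (↑B) ∧
  (∀ r ∈ R, ∀ r' ∈ R, r ≠ r' →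
    segment ℝ r (σ r) ∩ segment ℝ r' (σ r') = ∅)

/-- The bichromatic edge `{r, b}` is feasible: some bichromatic perfect non-crossing matching
of `B ∪ R` contains it. -/
def BFeasible (B R : Finset Pt) (r b : Pt) : Prop :=
  ∃ σ, IsBM B R σ ∧ σ r = b

/-- The subset `S` of `P ∩ h` is consecutive in the ordering of `P ∩ h` by distance to `x`:
every point of `P ∩ h` lying (in that ordering) between two points of `S` belongs to `S`. -/
def ConsecOn (x : Pt) (P h S : Set Pt) : Prop :=
  ∀ a ∈ S, ∀ c ∈ S, ∀ p ∈ P ∩ h, dist x a ≤ dist x p → dist x p ≤ dist x c → p ∈ S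

/-- The edge `{b, r}` lies in a small (acute) sector determined by the two lines through `x`
with directions `u` (blue) and `v` (red). -/
def InSmallSector (x u v b r : Pt) : Prop :=
  ∃ ε δ : ℝ, (ε = 1 ∨ ε = -1) ∧ (δ = 1 ∨ δ = -1) ∧
    0 < ⟪ε • u, δ • v⟫_ℝ ∧ b ∈ halfLine x (ε • u) ∧ r ∈ halfLine x (δ • v)

/-- The edge `{b, r}` lies in a big (non-acute) sector determined by the two lines through `x`
with directions `u` (blue) and `v` (red). -/
def InBigSector (x u v b r : Pt) : Prop :=
  ∃ ε δ : ℝ, (ε = 1 ∨ ε = -1) ∧ (δ = 1 ∨ δ = -1) ∧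
    ⟪ε • u, δ • v⟫_ℝ ≤ 0 ∧ b ∈ halfLine x (ε • u) ∧ r ∈ halfLine x (δ • v)

/-- The matching edge of the point `p` in the matching `σ` lies in a small sector. -/
def MatchedSmall (x u v : Pt) (R : Finset Pt) (σ : Pt → Pt) (p : Pt) : Prop :=
  ∃ r ∈ R, (p = r ∨ p = σ r) ∧ InSmallSector x u v (σ r) r

/-- The matching edge of the point `p` in the matching `σ` lies in a big sector. -/
def MatchedBig (x u v : Pt) (R : Finset Pt) (σ : Pt → Pt) (p : Pt) : Prop :=
  ∃ r ∈ R, (p = r ∨ p = σ r) ∧ InBigSector x u v (σ r) r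

/-- `q` is the matching partner of `p` in the matching `σ` (which maps red points to blue
points). -/
def IsPartner (R : Finset Pt) (σ : Pt → Pt) (p q : Pt) : Prop :=
  (p ∈ R ∧ q = σ p) ∨ (q ∈ R ∧ σ q = p)

set_option maxHeartbeats 1000000

section Basics
variable {x u v : Pt}

lemma inner_expand (u v : Pt) : ⟪u, v⟫_ℝ = u 0 * v 0 + u 1 * v 1 := by
  simp [PiLp.inner_apply, Fin.sum_univ_two, RCLike.inner_apply, conj_trivial]; ring

lemma norm_sq_expand (u : Pt) (hu : ‖u‖ = 1) : u 0 ^ 2 + u 1 ^ 2 = 1 := by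
  have h := EuclideanSpace.norm_eq u
  rw [hu] at h
  have hnn : (0:ℝ) ≤ ∑ i : Fin 2, ‖u i‖ ^ 2 := by positivity
  have h2 := Real.sq_sqrt hnn
  rw [← h] at h2
  have h3 : u 0 ^ 2 + u 1 ^ 2 = 1 := by
    simpa [Fin.sum_univ_two, Real.norm_eq_abs, sq_abs] using h2.symm
  linarith

/-- key linear independence -/
lemma indep (hnp : det2 u v ≠ 0) {a b : ℝ} (h : a • u + b • v = 0) : a = 0 ∧ b = 0 := by
  have h0 : a * u 0 + b * v 0 = 0 := by
    have := congrArg (fun w : Pt => w 0) h; simpa using this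
  have h1 : a * u 1 + b * v 1 = 0 := by
    have := congrArg (fun w : Pt => w 1) h; simpa using this
  unfold det2 at hnp
  constructor
  · by_contra ha
    apply hnp
    have : a * (u 0 * v 1 - u 1 * v 0) = 0 := by linear_combination v 1 * h0 - v 0 * h1
    rcases mul_eq_zero.1 this with h | h
    · exact absurd h ha
    · exact h
  · by_contra hb
    apply hnp
    have : b * (u 0 * v 1 - u 1 * v 0) = 0 := by linear_combination u 0 * h1 - u 1 * h0
    rcases mul_eq_zero.1 this with h | h
    · exact absurd h hb
    · exact h

lemma pt_eq_iff (hnp : det2 u v ≠ 0) {a b a' b' : ℝ} :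
    x + a • u + b • v = x + a' • u + b' • v ↔ a = a' ∧ b = b' := by
  constructor
  · intro h
    have h2 : (a - a') • u + (b - b') • v = 0 := by
      have : (x + a • u + b • v) - (x + a' • u + b' • v) = (a - a') • u + (b - b') • v := by
        module
      rw [h] at this
      simpa using this.symm
    have := indep hnp h2
    constructor <;> linarith [this.1, this.2]
  · rintro ⟨rfl, rfl⟩; rfl

/-- membership in a segment from a red point to a blue point -/
lemma mem_seg_iff {s t : ℝ} {y : Pt} :
    y ∈ segment ℝ (x + t • v) (x + s • u) ↔
      ∃ l : ℝ, 0 ≤ l ∧ l ≤ 1 ∧ y = x + (l * s) • u + ((1 - l) * t) • v := by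
  rw [segment_eq_image']
  constructor
  · rintro ⟨l, ⟨hl0, hl1⟩, rfl⟩
    exact ⟨l, hl0, hl1, by module⟩
  · rintro ⟨l, hl0, hl1, rfl⟩
    exact ⟨l, ⟨hl0, hl1⟩, by module⟩

/-- D1: nested same-sector edges are disjoint -/
lemma disj_nested (hnp : det2 u v ≠ 0) {s t s' t' : ℝ}
    (hss : 0 < s * s') (htt : 0 < t * t') (hs : |s| < |s'|) (ht : |t| < |t'|) :
    segment ℝ (x + t • v) (x + s • u) ∩ segment ℝ (x + t' • v) (x + s' • u) = ∅ := by
  ext y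
  simp only [Set.mem_inter_iff, Set.mem_empty_iff_false, iff_false, not_and]
  rintro hy hy'
  rw [mem_seg_iff] at hy hy'
  obtain ⟨l, hl0, hl1, rfl⟩ := hy
  obtain ⟨m, hm0, hm1, he⟩ := hy'
  rw [pt_eq_iff hnp] at he
  obtain ⟨h1, h2⟩ := he
  -- l * s = m * s', (1-l)*t = (1-m)*t'
  have habs1 : l * |s| = m * |s'| := by
    have := congrArg abs h1
    rwa [abs_mul, abs_mul, abs_of_nonneg hl0, abs_of_nonneg hm0] at this
  have hl1' : (0:ℝ) ≤ 1 - l := by linarith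
  have hm1' : (0:ℝ) ≤ 1 - m := by linarith
  have habs2 : (1 - l) * |t| = (1 - m) * |t'| := by
    have := congrArg abs h2
    rwa [abs_mul, abs_mul, abs_of_nonneg hl1', abs_of_nonneg hm1'] at this
  have hs0 : (0:ℝ) < |s| := abs_pos.2 (by rintro rfl; simp at hss)
  have ht0 : (0:ℝ) < |t| := abs_pos.2 (by rintro rfl; simp at htt)
  rcases eq_or_lt_of_le hl0 with h | h
  · -- l = 0 ⇒ m = 0 ⇒ |t| = |t'|
    have hm : m = 0 := by
      by_contra hm
      have : 0 < m * |s'| := mul_pos (lt_of_le_of_ne hm0 (Ne.symm hm)) (lt_trans hs0 hs)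
      rw [← habs1, ← h] at this; simp at this
    rw [← h, hm] at habs2; simp at habs2; linarith
  · -- l > 0
    have hs'0 : (0:ℝ) < |s'| := lt_trans hs0 hs
    have ht'0 : (0:ℝ) < |t'| := lt_trans ht0 ht
    have hml : m < l := by nlinarith [mul_lt_mul_of_pos_left hs h]
    have e1 : (1 - l) * |t| ≤ (1 - l) * |t'| := by
      apply mul_le_mul_of_nonneg_left (le_of_lt ht) hl1'
    have e2 : (1 - l) * |t'| < (1 - m) * |t'| := by
      apply mul_lt_mul_of_pos_right (by linarith) ht'0
    linarith

/-- D2: order-reversing same-sector edges intersect -/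
lemma cross_reversed (hnp : det2 u v ≠ 0) {s t s' t' : ℝ}
    (hss : 0 < s * s') (htt : 0 < t * t') (hs : |s| < |s'|) (ht : |t'| < |t|) :
    (segment ℝ (x + t • v) (x + s • u) ∩ segment ℝ (x + t' • v) (x + s' • u)).Nonempty := by
  set A := |s| with hA
  set A' := |s'| with hA'
  set Bt := |t| with hB
  set B' := |t'| with hB'
  have hs0 : (0:ℝ) < A := abs_pos.2 (by rintro rfl; simp at hss)
  have ht'0 : (0:ℝ) < B' := abs_pos.2 (by rintro rfl; simp at htt)
  have hden : 0 < A' * Bt - A * B' := by nlinarith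
  set l := A' * (Bt - B') / (A' * Bt - A * B') with hldef
  set m := A * (Bt - B') / (A' * Bt - A * B') with hmdef
  have hl0 : 0 ≤ l := by
    apply div_nonneg (by nlinarith) (le_of_lt hden)
  have hm0 : 0 ≤ m := by
    apply div_nonneg (by nlinarith) (le_of_lt hden)
  have hl1 : l ≤ 1 := by
    rw [hldef, div_le_one hden]; nlinarith
  have hm1 : m ≤ 1 := by
    rw [hmdef, div_le_one hden]; nlinarith
  have key1 : l * A = m * A' := by
    field_simp [hldef, hmdef]; ring
  have key2 : (1 - l) * Bt = (1 - m) * B' := by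
    have hD : A' * Bt - A * B' ≠ 0 := hden.ne'
    rw [hldef, hmdef, div_eq_mul_inv, div_eq_mul_inv]
    have hDI : (A' * Bt - A * B') * (A' * Bt - A * B')⁻¹ = 1 := mul_inv_cancel₀ hD
    linear_combination (B' - Bt) * hDI
  -- translate abs equations back to signed ones
  have hsgn_s : l * s = m * s' := by
    rcases (mul_pos_iff.1 hss) with ⟨h1, h2⟩ | ⟨h1, h2⟩
    · rw [hA, abs_of_pos h1] at key1; rw [hA', abs_of_pos h2] at key1; exact key1
    · rw [hA, abs_of_neg h1] at key1; rw [hA', abs_of_neg h2] at key1; linarith [key1]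
  have hsgn_t : (1 - l) * t = (1 - m) * t' := by
    rcases (mul_pos_iff.1 htt) with ⟨h1, h2⟩ | ⟨h1, h2⟩
    · rw [hB, abs_of_pos h1] at key2; rw [hB', abs_of_pos h2] at key2; exact key2
    · rw [hB, abs_of_neg h1] at key2; rw [hB', abs_of_neg h2] at key2; linarith [key2]
  refine ⟨x + (l * s) • u + ((1 - l) * t) • v, ?_, ?_⟩
  · exact mem_seg_iff.2 ⟨l, hl0, hl1, rfl⟩
  · exact mem_seg_iff.2 ⟨m, hm0, hm1, by rw [hsgn_s, hsgn_t]⟩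

/-- D3a: different blue halfline, distinct reds ⇒ disjoint -/
lemma disj_blue_sides (hnp : det2 u v ≠ 0) {s t s' t' : ℝ}
    (hss : s * s' < 0) (htt : t ≠ t') :
    segment ℝ (x + t • v) (x + s • u) ∩ segment ℝ (x + t' • v) (x + s' • u) = ∅ := by
  ext y
  simp only [Set.mem_inter_iff, Set.mem_empty_iff_false, iff_false, not_and]
  rintro hy hy'
  rw [mem_seg_iff] at hy hy'
  obtain ⟨l, hl0, hl1, rfl⟩ := hy
  obtain ⟨m, hm0, hm1, he⟩ := hy'
  rw [pt_eq_iff hnp] at he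
  obtain ⟨h1, h2⟩ := he
  have hls : l * s = 0 := by nlinarith [mul_nonneg hl0 hm0]
  have hs0 : s ≠ 0 := by rintro rfl; simp at hss
  have hs'0 : s' ≠ 0 := by rintro rfl; simp at hss
  have hl : l = 0 := by rcases mul_eq_zero.1 hls with h | h; exact h; exact absurd h hs0
  have hms : m * s' = 0 := by
    calc m * s' = l * s := h1.symm
    _ = 0 := by rw [hl]; ring
  have hm : m = 0 := by
    rcases mul_eq_zero.1 hms with h | h; exact h; exact absurd h hs'0
  have : t = t' := by
    have := h2; rw [hl, hm] at this; linarith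
  exact htt this

/-- D3b: different red halfline, distinct blues ⇒ disjoint -/
lemma disj_red_sides (hnp : det2 u v ≠ 0) {s t s' t' : ℝ}
    (htt : t * t' < 0) (hss : s ≠ s') :
    segment ℝ (x + t • v) (x + s • u) ∩ segment ℝ (x + t' • v) (x + s' • u) = ∅ := by
  ext y
  simp only [Set.mem_inter_iff, Set.mem_empty_iff_false, iff_false, not_and]
  rintro hy hy'
  rw [mem_seg_iff] at hy hy'
  obtain ⟨l, hl0, hl1, rfl⟩ := hy
  obtain ⟨m, hm0, hm1, he⟩ := hy'
  rw [pt_eq_iff hnp] at he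
  obtain ⟨h1, h2⟩ := he
  have hlt : (1 - l) * t = 0 := by nlinarith [mul_nonneg (by linarith : (0:ℝ) ≤ 1 - l) (by linarith : (0:ℝ) ≤ 1 - m)]
  have ht0 : t ≠ 0 := by rintro rfl; simp at htt
  have ht'0 : t' ≠ 0 := by rintro rfl; simp at htt
  have hl : l = 1 := by
    rcases mul_eq_zero.1 hlt with h | h
    · linarith
    · exact absurd h ht0
  have hmt : (1 - m) * t' = 0 := by
    calc (1 - m) * t' = (1 - l) * t := h2.symm
    _ = 0 := by rw [hl]; ring
  have hm : m = 1 := by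
    rcases mul_eq_zero.1 hmt with h | h
    · linarith
    · exact absurd h ht'0
  have : s = s' := by
    have := h1; rw [hl, hm] at this; linarith
  exact hss this

/-- squared length of an edge -/
lemma dist_edge (hu : ‖u‖ = 1) (hv : ‖v‖ = 1) (s t : ℝ) :
    dist (x + t • v) (x + s • u) ^ 2 = s ^ 2 + t ^ 2 - 2 * s * t * ⟪u, v⟫_ℝ := by
  rw [dist_eq_norm]
  have h : (x + t • v) - (x + s • u) = t • v - s • u := by module
  rw [h]
  rw [← real_inner_self_eq_norm_sq]
  rw [inner_sub_sub_self]
  simp only [real_inner_smul_left, real_inner_smul_right]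
  rw [real_inner_self_eq_norm_sq, real_inner_self_eq_norm_sq, hu, hv,
    real_inner_comm v u]
  ring

/-- Lagrange: inner product strictly less than 1 in absolute value -/
lemma abs_inner_lt_one (hu : ‖u‖ = 1) (hv : ‖v‖ = 1) (hnp : det2 u v ≠ 0) :
    |⟪u, v⟫_ℝ| < 1 := by
  have h1 := norm_sq_expand u hu
  have h2 := norm_sq_expand v hv
  have h3 : ⟪u, v⟫_ℝ ^ 2 + det2 u v ^ 2 = 1 := by
    rw [inner_expand]; unfold det2; nlinarith
  have h4 : 0 < det2 u v ^ 2 := by positivity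
  have : ⟪u, v⟫_ℝ ^ 2 < 1 := by nlinarith
  nlinarith [abs_nonneg (⟪u, v⟫_ℝ), sq_abs (⟪u, v⟫_ℝ)]

end Basics

section Coords
variable {x u v : Pt}

/-- `u`-coordinate of a point relative to `x` in the basis `(u, v)`. -/
def cU (x u v p : Pt) : ℝ := det2 (p - x) v / det2 u v
/-- `v`-coordinate. -/
def cV (x u v p : Pt) : ℝ := det2 u (p - x) / det2 u v

lemma cU_spec (hnp : det2 u v ≠ 0) (s t : ℝ) : cU x u v (x + s • u + t • v) = s := by
  unfold cU det2 at *
  have h0 : (x + s • u + t • v - x) 0 = s * u 0 + t * v 0 := by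
    simp; ring
  have h1 : (x + s • u + t • v - x) 1 = s * u 1 + t * v 1 := by
    simp; ring
  rw [h0, h1, div_eq_iff hnp]; ring

lemma cV_spec (hnp : det2 u v ≠ 0) (s t : ℝ) : cV x u v (x + s • u + t • v) = t := by
  unfold cV det2 at *
  have h0 : (x + s • u + t • v - x) 0 = s * u 0 + t * v 0 := by
    simp; ring
  have h1 : (x + s • u + t • v - x) 1 = s * u 1 + t * v 1 := by
    simp; ring
  rw [h0, h1, div_eq_iff hnp]; ring

lemma cU_blue (hnp : det2 u v ≠ 0) (s : ℝ) : cU x u v (x + s • u) = s := by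
  have : x + s • u = x + s • u + (0:ℝ) • v := by module
  rw [this, cU_spec hnp]

lemma cV_red (hnp : det2 u v ≠ 0) (t : ℝ) : cV x u v (x + t • v) = t := by
  have : x + t • v = x + (0:ℝ) • u + t • v := by module
  rw [this, cV_spec hnp]

lemma blue_eq_iff (hnp : det2 u v ≠ 0) {s s' : ℝ} : x + s • u = x + s' • u ↔ s = s' := by
  constructor
  · intro h
    have := congrArg (cU x u v) h
    rwa [cU_blue hnp, cU_blue hnp] at this
  · rintro rfl; rfl

lemma red_eq_iff (hnp : det2 u v ≠ 0) {t t' : ℝ} : x + t • v = x + t' • v ↔ t = t' := by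
  constructor
  · intro h
    have := congrArg (cV x u v) h
    rwa [cV_red hnp, cV_red hnp] at this
  · rintro rfl; rfl

lemma blue_ne_red (hnp : det2 u v ≠ 0) {s t : ℝ} (hs : s ≠ 0) :
    x + s • u ≠ x + t • v := by
  intro h
  have h1 : x + s • u + (0:ℝ) • v = x + (0:ℝ) • u + t • v := by
    rw [show x + s • u + (0:ℝ) • v = x + s • u by module,
      show x + (0:ℝ) • u + t • v = x + t • v by module]
    exact h
  exact hs ((pt_eq_iff hnp).1 h1).1

lemma mem_halfLine_blue (hnp : det2 u v ≠ 0) {ε s : ℝ} (hε : ε = 1 ∨ ε = -1) :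
    x + s • u ∈ halfLine x (ε • u) ↔ 0 < ε * s := by
  have hε2 : ε * ε = 1 := by rcases hε with rfl | rfl <;> norm_num
  constructor
  · rintro ⟨l, hl, he⟩
    have h2 : x + s • u = x + (l * ε) • u := by
      rw [he]; module
    have := (blue_eq_iff hnp).1 h2
    subst this
    calc (0:ℝ) < l * (ε * ε) := by rw [hε2]; linarith
    _ = ε * (l * ε) := by ring
  · intro h
    refine ⟨ε * s, h, ?_⟩
    rw [smul_smul, show ε * s * ε = s * (ε * ε) by ring, hε2, mul_one]

lemma mem_halfLine_red (hnp : det2 u v ≠ 0) {δ t : ℝ} (hδ : δ = 1 ∨ δ = -1) :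
    x + t • v ∈ halfLine x (δ • v) ↔ 0 < δ * t := by
  have hδ2 : δ * δ = 1 := by rcases hδ with rfl | rfl <;> norm_num
  constructor
  · rintro ⟨l, hl, he⟩
    have h2 : x + t • v = x + (l * δ) • v := by
      rw [he]; module
    have := (red_eq_iff hnp).1 h2
    subst this
    calc (0:ℝ) < l * (δ * δ) := by rw [hδ2]; linarith
    _ = δ * (l * δ) := by ring
  · intro h
    refine ⟨δ * t, h, ?_⟩
    rw [smul_smul, show δ * t * δ = t * (δ * δ) by ring, hδ2, mul_one]

lemma red_not_blue_halfLine (hnp : det2 u v ≠ 0) {ε t : ℝ} (hε : ε = 1 ∨ ε = -1)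
    (ht : t ≠ 0) : x + t • v ∉ halfLine x (ε • u) := by
  rintro ⟨l, hl, he⟩
  have h2 : x + (l * ε) • u + (0:ℝ) • v = x + (0:ℝ) • u + t • v := by
    rw [show x + (l*ε) • u + (0:ℝ) • v = x + l • (ε • u) by module,
      show x + (0:ℝ) • u + t • v = x + t • v by module]
    exact he.symm
  exact ht (((pt_eq_iff hnp).1 h2).2).symm

lemma blue_not_red_halfLine (hnp : det2 u v ≠ 0) {δ s : ℝ} (hδ : δ = 1 ∨ δ = -1)
    (hs : s ≠ 0) : x + s • u ∉ halfLine x (δ • v) := by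
  rintro ⟨l, hl, he⟩
  have h2 : x + s • u + (0:ℝ) • v = x + (0:ℝ) • u + (l * δ) • v := by
    rw [show x + s • u + (0:ℝ) • v = x + s • u by module,
      show x + (0:ℝ) • u + (l*δ) • v = x + l • (δ • v) by module]
    exact he
  exact hs ((pt_eq_iff hnp).1 h2).1

lemma smallSec_iff (hnp : det2 u v ≠ 0) {s t : ℝ} (hs : s ≠ 0) (ht : t ≠ 0) :
    InSmallSector x u v (x + s • u) (x + t • v) ↔ 0 < s * t * ⟪u, v⟫_ℝ := by
  constructor
  · rintro ⟨ε, δ, hε, hδ, hpos, hb, hr⟩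
    rw [mem_halfLine_blue hnp hε] at hb
    rw [mem_halfLine_red hnp hδ] at hr
    rw [real_inner_smul_left, real_inner_smul_right] at hpos
    rcases hε with rfl | rfl <;> rcases hδ with rfl | rfl <;>
      nlinarith [mul_pos (mul_pos hb hr) hpos]
  · intro h
    rcases lt_trichotomy s 0 with hs' | hs' | hs' <;>
      rcases lt_trichotomy t 0 with ht' | ht' | ht'
    · have hst : 0 < s * t := mul_pos_of_neg_of_neg hs' ht'
      have hc : 0 < ⟪u, v⟫_ℝ := by nlinarith
      exact ⟨-1, -1, Or.inr rfl, Or.inr rfl, by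
        rw [real_inner_smul_left, real_inner_smul_right]; linarith, by
        rw [mem_halfLine_blue hnp (Or.inr rfl)]; linarith, by
        rw [mem_halfLine_red hnp (Or.inr rfl)]; linarith⟩
    · exact absurd ht' ht
    · have hst : s * t < 0 := mul_neg_of_neg_of_pos hs' ht'
      have hc : ⟪u, v⟫_ℝ < 0 := by nlinarith
      exact ⟨-1, 1, Or.inr rfl, Or.inl rfl, by
        rw [real_inner_smul_left, real_inner_smul_right]; linarith, by
        rw [mem_halfLine_blue hnp (Or.inr rfl)]; linarith, by
        rw [mem_halfLine_red hnp (Or.inl rfl)]; linarith⟩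
    · exact absurd hs' hs
    · exact absurd hs' hs
    · exact absurd hs' hs
    · have hst : s * t < 0 := mul_neg_of_pos_of_neg hs' ht'
      have hc : ⟪u, v⟫_ℝ < 0 := by nlinarith
      exact ⟨1, -1, Or.inl rfl, Or.inr rfl, by
        rw [real_inner_smul_left, real_inner_smul_right]; linarith, by
        rw [mem_halfLine_blue hnp (Or.inl rfl)]; linarith, by
        rw [mem_halfLine_red hnp (Or.inr rfl)]; linarith⟩
    · exact absurd ht' ht
    · have hst : 0 < s * t := mul_pos hs' ht'
      have hc : 0 < ⟪u, v⟫_ℝ := by nlinarith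
      exact ⟨1, 1, Or.inl rfl, Or.inl rfl, by
        rw [real_inner_smul_left, real_inner_smul_right]; linarith, by
        rw [mem_halfLine_blue hnp (Or.inl rfl)]; linarith, by
        rw [mem_halfLine_red hnp (Or.inl rfl)]; linarith⟩

end Coords

section Matching
variable {x u v : Pt} {B R : Finset Pt} {σ : Pt → Pt}

lemma same_sign_abs_eq {a b : ℝ} (h : 0 < a * b) (he : |a| = |b|) : a = b := by
  rcases mul_pos_iff.1 h with ⟨h1, h2⟩ | ⟨h1, h2⟩
  · rwa [abs_of_pos h1, abs_of_pos h2] at he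
  · rw [abs_of_neg h1, abs_of_neg h2] at he; linarith

/-- non-crossing implies order-preserving within a sector -/
lemma op_lemma (hnp : det2 u v ≠ 0) (hσ : IsBM B R σ) {r r' : Pt} (hr : r ∈ R)
    (hr' : r' ∈ R) (hne : r ≠ r') {s t s' t' : ℝ}
    (he1 : r = x + t • v) (he2 : σ r = x + s • u)
    (he3 : r' = x + t' • v) (he4 : σ r' = x + s' • u)
    (hss : 0 < s * s') (htt : 0 < t * t') (hlt : |t| < |t'|) : |s| < |s'| := by
  have hsne : s ≠ s' := by
    intro h
    apply hne
    apply hσ.1.injOn hr hr'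
    rw [he2, he4, h]
  rcases lt_or_ge |s| |s'| with hgood | hle
  · exact hgood
  have hslt : |s'| < |s| := by
    rcases eq_or_lt_of_le hle with he | hstrict
    · exact absurd (same_sign_abs_eq hss he.symm) hsne
    · exact hstrict
  have hcross := cross_reversed (x := x) hnp (s := s') (t := t') (s' := s) (t' := t)
      (by nlinarith) (by nlinarith) hslt hlt
  obtain ⟨y, hy⟩ := hcross
  have hdisj := hσ.2 r' hr' r hr hne.symm
  rw [he4, he2, he3, he1] at hdisj
  rw [hdisj] at hy
  exact absurd hy (Set.notMem_empty y)

lemma matched_blue (hnp : det2 u v ≠ 0) (hσ : IsBM B R σ)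
    (hR : ∀ r ∈ R, ∃ t : ℝ, t ≠ 0 ∧ r = x + t • v) {r : Pt} (hr : r ∈ R)
    {s : ℝ} (hs : s ≠ 0) (he : σ r = x + s • u) :
    MatchedSmall x u v R σ (σ r) ↔ InSmallSector x u v (σ r) r := by
  constructor
  · rintro ⟨r', hr', hor, hsm⟩
    rcases hor with heq | heq
    · obtain ⟨t', ht'0, he'⟩ := hR r' hr'
      exfalso
      apply blue_ne_red hnp hs
      rw [← he, heq, he']
    · have hrr : r = r' := hσ.1.injOn hr hr' (by rw [← heq])
      rw [hrr]; exact hsm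
  · intro h; exact ⟨r, hr, Or.inr rfl, h⟩

lemma matched_red (hnp : det2 u v ≠ 0) (hσ : IsBM B R σ)
    (hB : ∀ b ∈ B, ∃ s : ℝ, s ≠ 0 ∧ b = x + s • u)
    (hR : ∀ r ∈ R, ∃ t : ℝ, t ≠ 0 ∧ r = x + t • v) {r : Pt} (hr : r ∈ R) :
    MatchedSmall x u v R σ r ↔ InSmallSector x u v (σ r) r := by
  constructor
  · rintro ⟨r', hr', hor, hsm⟩
    rcases hor with heq | heq
    · rw [heq]; exact hsm
    · exfalso
      obtain ⟨s', hs'0, he'⟩ := hB (σ r') (hσ.1.mapsTo hr')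
      obtain ⟨t, ht0, he⟩ := hR r hr
      apply blue_ne_red hnp hs'0
      rw [← he', ← heq, he]
  · intro h; exact ⟨r, hr, Or.inl rfl, h⟩

/-- existence of some bichromatic non-crossing matching -/
lemma exists_isBM (hnp : det2 u v ≠ 0) : ∀ (n : ℕ) (B R : Finset Pt),
    B.card = n → R.card = n →
    (∀ b ∈ B, ∃ s : ℝ, s ≠ 0 ∧ b = x + s • u) →
    (∀ r ∈ R, ∃ t : ℝ, t ≠ 0 ∧ r = x + t • v) →
    ∃ σ, IsBM B R σ := by
  classical
  intro n
  induction n with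
  | zero =>
    intro B R hBc hRc _ _
    rw [Finset.card_eq_zero] at hBc hRc
    subst hBc; subst hRc
    exact ⟨id, by simp [Set.bijOn_empty], by simp⟩
  | succ n ih =>
    intro B R hBc hRc hB hR
    have hRne : R.Nonempty := Finset.card_pos.1 (by omega)
    have hBne : B.Nonempty := Finset.card_pos.1 (by omega)
    obtain ⟨rm, hrm, hrmax⟩ := R.exists_max_image (fun r => |cV x u v r|) hRne
    obtain ⟨bm, hbm, hbmax⟩ := B.exists_max_image (fun b => |cU x u v b|) hBne
    obtain ⟨σ', hσ'⟩ := ih (B.erase bm) (R.erase rm)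
      (by rw [Finset.card_erase_of_mem hbm]; omega)
      (by rw [Finset.card_erase_of_mem hrm]; omega)
      (fun b hb => hB b (Finset.mem_of_mem_erase hb))
      (fun r hrr => hR r (Finset.mem_of_mem_erase hrr))
    set σ := Function.update σ' rm bm with hσdef
    have hagree : ∀ r' ∈ R.erase rm, σ r' = σ' r' := by
      intro r' hr'
      exact Function.update_of_ne (Finset.ne_of_mem_erase hr') _ _
    have hσrm : σ rm = bm := Function.update_self _ _ _
    -- coordinates
    obtain ⟨T, hT0, hrmeq⟩ := hR rm hrm
    obtain ⟨S, hS0, hbmeq⟩ := hB bm hbm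
    have hbij : Set.BijOn σ (↑R) (↑B) := by
      have h1 : Set.BijOn σ' (↑(R.erase rm)) (↑(B.erase bm)) := hσ'.1
      have h2 : Set.BijOn σ (↑(R.erase rm)) (↑(B.erase bm)) := by
        apply Set.BijOn.congr h1
        intro r' hr'
        exact (hagree r' (by exact_mod_cast hr')).symm
      have h3 : σ rm ∉ (↑(B.erase bm) : Set Pt) := by
        rw [hσrm]
        simp
      have h4 := Set.BijOn.insert h2 h3
      rw [hσrm] at h4
      have e1 : insert rm (↑(R.erase rm) : Set Pt) = ↑R := by
        rw [← Finset.coe_insert, Finset.insert_erase hrm]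
      have e2 : insert bm (↑(B.erase bm) : Set Pt) = ↑B := by
        rw [← Finset.coe_insert, Finset.insert_erase hbm]
      rwa [e1, e2] at h4
    -- main disjointness against the new edge
    have main : ∀ r' ∈ R.erase rm,
        segment ℝ rm bm ∩ segment ℝ r' (σ' r') = ∅ := by
      intro r' hr'
      obtain ⟨t', ht'0, hr'eq⟩ := hR r' (Finset.mem_of_mem_erase hr')
      have hσ'B : σ' r' ∈ B.erase bm := by exact_mod_cast hσ'.1.mapsTo (by exact_mod_cast hr')
      obtain ⟨s', hs'0, hb'eq⟩ := hB (σ' r') (Finset.mem_of_mem_erase hσ'B)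
      -- coordinate size facts
      have hTmax : |t'| ≤ |T| := by
        have := hrmax r' (Finset.mem_of_mem_erase hr')
        rwa [hrmeq, hr'eq, cV_red hnp, cV_red hnp] at this
      have hSmax : |s'| ≤ |S| := by
        have := hbmax (σ' r') (Finset.mem_of_mem_erase hσ'B)
        rwa [hbmeq, hb'eq, cU_blue hnp, cU_blue hnp] at this
      have htne : t' ≠ T := by
        intro h
        exact (Finset.ne_of_mem_erase hr') (by rw [hr'eq, hrmeq, h])
      have hsne : s' ≠ S := by
        intro h
        exact (Finset.ne_of_mem_erase hσ'B) (by rw [hb'eq, hbmeq, h])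
      rw [hb'eq, hr'eq, hrmeq, hbmeq, Set.inter_comm]
      by_cases hss : 0 < s' * S
      · by_cases htt : 0 < t' * T
        · have hs_strict : |s'| < |S| :=
            lt_of_le_of_ne hSmax (fun h => hsne (same_sign_abs_eq hss h))
          have ht_strict : |t'| < |T| :=
            lt_of_le_of_ne hTmax (fun h => htne (same_sign_abs_eq htt h))
          exact disj_nested hnp hss htt hs_strict ht_strict
        · have htt' : t' * T < 0 :=
            lt_of_le_of_ne (not_lt.1 htt) (mul_ne_zero ht'0 hT0)
          rw [Set.inter_comm]
          exact disj_red_sides hnp (by nlinarith) (fun h => hsne h.symm)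
      · have hss' : s' * S < 0 :=
          lt_of_le_of_ne (not_lt.1 hss) (mul_ne_zero hs'0 hS0)
        rw [Set.inter_comm]
        exact disj_blue_sides hnp (by nlinarith) (fun h => htne h.symm)
    refine ⟨σ, hbij, ?_⟩
    intro r hrR r' hr'R hne
    by_cases h1 : r = rm <;> by_cases h2 : r' = rm
    · exact absurd (h1.trans h2.symm) hne
    · have hr'e : r' ∈ R.erase rm := Finset.mem_erase.2 ⟨h2, hr'R⟩
      rw [h1, hσrm, hagree r' hr'e]
      exact main r' hr'e
    · have hre : r ∈ R.erase rm := Finset.mem_erase.2 ⟨h1, hrR⟩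
      rw [h2, hσrm, hagree r hre, Set.inter_comm]
      exact main r hre
    · have hre : r ∈ R.erase rm := Finset.mem_erase.2 ⟨h1, hrR⟩
      have hr'e : r' ∈ R.erase rm := Finset.mem_erase.2 ⟨h2, hr'R⟩
      rw [hagree r hre, hagree r' hr'e]
      exact hσ'.2 r hre r' hr'e hne

end Matching

section MinSel
variable {x u v : Pt}

lemma le_of_sq_le_sq' {a b : ℝ} (ha : 0 ≤ a) (hb : 0 ≤ b) (h : a ^ 2 ≤ b ^ 2) : a ≤ b := by
  nlinarith

lemma dist_x_blue (hu : ‖u‖ = 1) (s : ℝ) : dist x (x + s • u) = |s| := by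
  rw [dist_eq_norm]
  have : x - (x + s • u) = (-s) • u := by module
  rw [this, norm_smul, hu]
  simp

lemma exists_min_matching (B R : Finset Pt) (hRne : R.Nonempty)
    (hex : ∃ σ, IsBM B R σ) :
    ∃ σ, IsBM B R σ ∧
      (∀ σ', IsBM B R σ' → R.sup' hRne (fun r => dist r (σ r)) ≤
        R.sup' hRne (fun r => dist r (σ' r))) ∧
      (∀ σ', IsBM B R σ' →
        R.sup' hRne (fun r => dist r (σ' r)) ≤ R.sup' hRne (fun r => dist r (σ r)) →
        ∑ r ∈ R, dist r (σ r) ^ 2 ≤ ∑ r ∈ R, dist r (σ' r) ^ 2) := by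
  classical
  set ml : (Pt → Pt) → ℝ := fun σ => R.sup' hRne (fun r => dist r (σ r)) with hml
  set ph : (Pt → Pt) → ℝ := fun σ => ∑ r ∈ R, dist r (σ r) ^ 2 with hph
  set Vals : Set (ℝ × ℝ) := {p | ∃ σ, IsBM B R σ ∧ p = (ml σ, ph σ)} with hValsdef
  have hattne : R.attach.Nonempty := Finset.attach_nonempty_iff.2 hRne
  have hfin : Vals.Finite := by
    set G : ({y // y ∈ R} → {y // y ∈ B}) → ℝ × ℝ := fun f =>
      (R.attach.sup' hattne (fun r => dist r.1 (f r).1),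
       ∑ r ∈ R.attach, dist r.1 ((f r).1) ^ 2) with hG
    apply Set.Finite.subset (Set.finite_range G)
    rintro p ⟨σ0, hσ0, rfl⟩
    refine ⟨fun r => ⟨σ0 r.1, hσ0.1.mapsTo r.2⟩, ?_⟩
    rw [hG]
    have c1 : R.attach.sup' hattne (fun r => dist r.1 (σ0 r.1)) = ml σ0 := by
      apply le_antisymm
      · apply Finset.sup'_le
        intro r _
        exact Finset.le_sup' (f := fun q => dist q (σ0 q)) r.2
      · apply Finset.sup'_le
        intro r hr2
        exact Finset.le_sup' (f := fun q : {y // y ∈ R} => dist q.1 (σ0 q.1))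
          (Finset.mem_attach R ⟨r, hr2⟩)
    have c2 : (∑ r ∈ R.attach, dist r.1 (σ0 r.1) ^ 2) = ph σ0 := by
      rw [hph]
      exact Finset.sum_attach R (fun q => dist q (σ0 q) ^ 2)
    simp only [c1, c2]
  have hne : Vals.Nonempty := by
    obtain ⟨σ0, h⟩ := hex; exact ⟨_, σ0, h, rfl⟩
  obtain ⟨p1, hp1, hmin1⟩ := Set.exists_min_image Vals Prod.fst hfin hne
  set Vals2 : Set (ℝ × ℝ) := {p ∈ Vals | p.1 = p1.1} with hV2
  have hfin2 : Vals2.Finite := hfin.subset (fun p hp => hp.1)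
  have hne2 : Vals2.Nonempty := ⟨p1, hp1, rfl⟩
  obtain ⟨p2, hp2, hmin2⟩ := Set.exists_min_image Vals2 Prod.snd hfin2 hne2
  obtain ⟨σ0, hσ0, hp2eq⟩ := hp2.1
  have hfst : ml σ0 = p1.1 := by
    have := hp2.2; rw [hp2eq] at this; exact this
  refine ⟨σ0, hσ0, ?_, ?_⟩
  · intro σ' hσ'
    have h1 : (ml σ', ph σ') ∈ Vals := ⟨σ', hσ', rfl⟩
    have h2 := hmin1 _ h1
    rw [← hfst] at h2
    exact h2
  · intro σ' hσ' hle
    have hself : ml σ0 ≤ ml σ' := by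
      have h1 : (ml σ', ph σ') ∈ Vals := ⟨σ', hσ', rfl⟩
      have h2 := hmin1 _ h1
      rw [← hfst] at h2
      exact h2
    have heq : ml σ' = p1.1 := by
      rw [← hfst]; exact le_antisymm hle hself
    have h1 : (ml σ', ph σ') ∈ Vals2 := ⟨⟨σ', hσ', rfl⟩, heq⟩
    have h2 := hmin2 _ h1
    rw [hp2eq] at h2
    exact h2

end MinSel

section Alg

/-- Claim C : the swapped small edge is dominated by one of three old edges. -/
lemma claimC {γ s1 s2 s3 d1 d3 : ℝ} (hγ0 : 0 < γ) (hγ1 : γ < 1)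
    (h1 : 0 < s1) (h12 : s1 < s2) (h23 : s2 < s3)
    (hd1 : 0 < d1) (hd13 : d1 < d3) :
    s2 ^ 2 + d1 ^ 2 - 2 * γ * s2 * d1 ≤
      max (s1 ^ 2 + d1 ^ 2 - 2 * γ * s1 * d1)
        (max (s2 ^ 2) (s3 ^ 2 + d3 ^ 2 - 2 * γ * s3 * d3)) := by
  rcases le_or_gt d1 (2 * γ * s2) with hc | hc
  · apply le_trans ?_ (le_max_of_le_right (le_max_left _ _))
    nlinarith [mul_le_mul_of_nonneg_left hc (le_of_lt hd1)]
  · rcases le_or_gt (s1 + s2) (2 * γ * d1) with hc2 | hc2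
    · apply le_trans ?_ (le_max_left _ _)
      nlinarith [mul_le_mul_of_nonneg_left hc2 (by linarith : (0:ℝ) ≤ s2 - s1)]
    · have hA : 0 < s3 - s2 := by linarith
      have hBd : 0 < d3 - d1 := by linarith
      have k1 : 0 < (s3 - s2) * (2 * s2 - 2 * γ * d1) := mul_pos hA (by linarith)
      have k2 : 0 < (d3 - d1) * (2 * d1 - 2 * γ * s2) :=
        mul_pos hBd (by nlinarith [mul_pos hγ0 (lt_trans h1 h12)])
      have k3 : 0 ≤ (s3 - s2 - (d3 - d1)) ^ 2 := sq_nonneg _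
      have k4 : 0 < (1 - γ) * ((s3 - s2) * (d3 - d1)) :=
        mul_pos (by linarith) (mul_pos hA hBd)
      apply le_trans ?_ (le_max_of_le_right (le_max_right _ _))
      nlinarith [k1, k2, k3, k4]

end Alg


section SignHelpers

lemma t_sign_flip {s1 s2 t1 t2 cc : ℝ} (h12 : 0 < s1 * s2)
    (h1 : 0 < s1 * t1 * cc) (h2 : s2 * t2 * cc < 0) : t1 * t2 < 0 := by
  by_contra hcon
  push_neg at hcon
  nlinarith [mul_pos h1 (neg_pos.2 h2), mul_nonneg (mul_nonneg h12.le hcon) (sq_nonneg cc)]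

lemma t_sign_keep {s1 s3 t1 t3 cc : ℝ} (h13 : 0 < s1 * s3)
    (h1 : 0 < s1 * t1 * cc) (h3 : 0 < s3 * t3 * cc) (ht1 : t1 ≠ 0) (ht3 : t3 ≠ 0) :
    0 < t1 * t3 := by
  rcases lt_trichotomy (t1 * t3) 0 with h | h | h
  · exfalso
    nlinarith [mul_pos h1 h3, mul_nonneg (mul_nonneg h13.le (neg_pos.2 h).le) (sq_nonneg cc)]
  · exact absurd h (mul_ne_zero ht1 ht3)
  · exact h

lemma s_sign_flip {t1 t2 s1 s2 cc : ℝ} (h12 : 0 < t1 * t2)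
    (h1 : 0 < s1 * t1 * cc) (h2 : s2 * t2 * cc < 0) : s1 * s2 < 0 := by
  by_contra hcon
  push_neg at hcon
  nlinarith [mul_pos h1 (neg_pos.2 h2), mul_nonneg (mul_nonneg hcon h12.le) (sq_nonneg cc)]

lemma s_sign_keep {t1 t3 s1 s3 cc : ℝ} (h13 : 0 < t1 * t3)
    (h1 : 0 < s1 * t1 * cc) (h3 : 0 < s3 * t3 * cc) (hs1 : s1 ≠ 0) (hs3 : s3 ≠ 0) :
    0 < s1 * s3 := by
  rcases lt_trichotomy (s1 * s3) 0 with h | h | h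
  · exfalso
    nlinarith [mul_pos h1 h3, mul_nonneg (mul_nonneg (neg_pos.2 h).le h13.le) (sq_nonneg cc)]
  · exact absurd h (mul_ne_zero hs1 hs3)
  · exact h

lemma edge_flip_pos {s1 s2 t1 cc : ℝ} (h12 : 0 < s1 * s2) (h1 : 0 < s1 * t1 * cc) :
    0 < s2 * t1 * cc := by
  nlinarith [mul_pos h12 h1, sq_nonneg s1]

lemma edge_flip_neg {s1 s2 t2 cc : ℝ} (h12 : 0 < s1 * s2) (h2 : s2 * t2 * cc < 0) :
    s1 * t2 * cc < 0 := by
  nlinarith [mul_pos h12 (neg_pos.2 h2), sq_nonneg s2]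

lemma edge_flip_pos' {t1 t2 s1 cc : ℝ} (h12 : 0 < t1 * t2) (h1 : 0 < s1 * t1 * cc) :
    0 < s1 * t2 * cc := by
  nlinarith [mul_pos h12 h1, sq_nonneg t1]

lemma edge_flip_neg' {t1 t2 s2 cc : ℝ} (h12 : 0 < t1 * t2) (h2 : s2 * t2 * cc < 0) :
    s2 * t1 * cc < 0 := by
  nlinarith [mul_pos h12 (neg_pos.2 h2), sq_nonneg t2]

lemma mono_big {g a1 a2 e : ℝ} (hg : 0 ≤ g) (h12 : a1 ≤ a2) (ha1 : 0 ≤ a1) (he : 0 ≤ e) :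
    a1 ^ 2 + e ^ 2 + 2 * g * a1 * e ≤ a2 ^ 2 + e ^ 2 + 2 * g * a2 * e := by
  nlinarith [mul_nonneg (mul_nonneg hg (sub_nonneg.2 h12)) he,
    mul_nonneg (sub_nonneg.2 h12) (by linarith : (0:ℝ) ≤ a1 + a2)]

lemma mono_big2 {g a d1 d2 : ℝ} (hg : 0 ≤ g) (h12 : d1 ≤ d2) (hd1 : 0 ≤ d1) (ha : 0 ≤ a) :
    a ^ 2 + d1 ^ 2 + 2 * g * a * d1 ≤ a ^ 2 + d2 ^ 2 + 2 * g * a * d2 := by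
  nlinarith [mul_nonneg (mul_nonneg hg ha) (sub_nonneg.2 h12),
    mul_nonneg (sub_nonneg.2 h12) (by linarith : (0:ℝ) ≤ d1 + d2)]

lemma sq_le_of_big {g a e M : ℝ} (hg : 0 ≤ g) (ha : 0 ≤ a) (he : 0 ≤ e)
    (h : a ^ 2 + e ^ 2 + 2 * g * a * e ≤ M) : a ^ 2 ≤ M := by
  nlinarith [mul_nonneg (mul_nonneg hg ha) he, sq_nonneg e]

lemma sq_le_of_big2 {g a e M : ℝ} (hg : 0 ≤ g) (ha : 0 ≤ a) (he : 0 ≤ e)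
    (h : a ^ 2 + e ^ 2 + 2 * g * a * e ≤ M) : e ^ 2 ≤ M := by
  nlinarith [mul_nonneg (mul_nonneg hg ha) he, sq_nonneg a]

lemma phi_drop {g a1 a2 d e : ℝ} (hg : 0 < g) (h12 : a1 < a2) (hd : 0 < d) (he : 0 < e) :
    (a2 ^ 2 + d ^ 2 - 2 * g * a2 * d) + (a1 ^ 2 + e ^ 2 + 2 * g * a1 * e) <
      (a1 ^ 2 + d ^ 2 - 2 * g * a1 * d) + (a2 ^ 2 + e ^ 2 + 2 * g * a2 * e) := by
  nlinarith [mul_pos hg (mul_pos (sub_pos.2 h12) (add_pos hd he))]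

lemma phi_drop2 {g b1 b2 sA sB : ℝ} (hg : 0 < g) (h12 : b1 < b2) (hsA : 0 < sA)
    (hsB : 0 < sB) :
    (sB ^ 2 + b1 ^ 2 + 2 * g * sB * b1) + (b2 ^ 2 + sA ^ 2 - 2 * g * b2 * sA) <
      (sA ^ 2 + b1 ^ 2 - 2 * g * sA * b1) + (sB ^ 2 + b2 ^ 2 + 2 * g * sB * b2) := by
  nlinarith [mul_pos hg (mul_pos (add_pos hsA hsB) (sub_pos.2 h12))]

end SignHelpers

section Swap
variable {x u v : Pt} {B R : Finset Pt} {σ : Pt → Pt}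

lemma pos_chain {a b d : ℝ} (h1 : 0 < a * b) (h2 : 0 < b * d) : 0 < a * d := by
  nlinarith [mul_pos h1 h2, sq_nonneg b]

lemma sector_transfer {s t s' t' cc : ℝ} (h1 : 0 < s * s') (h2 : 0 < t * t')
    (h3 : 0 < s' * t' * cc) : 0 < s * t * cc := by
  nlinarith [mul_pos (mul_pos h1 h2) h3, sq_nonneg (s' * t')]

lemma bijOn_swap_update [DecidableEq Pt] (hσ : Set.BijOn σ (↑R : Set Pt) ↑B) {r1 r2 : Pt}
    (h1 : r1 ∈ R) (h2 : r2 ∈ R) (hne : r1 ≠ r2) :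
    Set.BijOn (Function.update (Function.update σ r1 (σ r2)) r2 (σ r1)) (↑R) ↑B := by
  classical
  have key : Function.update (Function.update σ r1 (σ r2)) r2 (σ r1)
      = σ ∘ (Equiv.swap r1 r2) := by
    funext y
    by_cases hy1 : y = r2
    · subst hy1
      simp [Function.update_self, Equiv.swap_apply_right]
    · by_cases hy2 : y = r1
      · subst hy2
        rw [Function.update_of_ne hne, Function.update_self]
        simp [Equiv.swap_apply_left]
      · rw [Function.update_of_ne hy1, Function.update_of_ne hy2]
        simp [Equiv.swap_apply_of_ne_of_ne hy2 hy1]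
  rw [key]
  exact Set.BijOn.comp hσ (Equiv.swap_bijOn_self (by simp [h1, h2]))

lemma swap_blue (hu : ‖u‖ = 1) (hv : ‖v‖ = 1) (hnp : det2 u v ≠ 0)
    (hRne : R.Nonempty) (hσ : IsBM B R σ)
    (hB : ∀ b ∈ B, ∃ s : ℝ, s ≠ 0 ∧ b = x + s • u)
    (hR : ∀ r ∈ R, ∃ t : ℝ, t ≠ 0 ∧ r = x + t • v)
    {r1 r2 r3 : Pt} (hr1 : r1 ∈ R) (hr2 : r2 ∈ R) (hr3 : r3 ∈ R)
    {s1 t1 s2 t2 s3 t3 : ℝ}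
    (e1r : r1 = x + t1 • v) (e1b : σ r1 = x + s1 • u)
    (e2r : r2 = x + t2 • v) (e2b : σ r2 = x + s2 • u)
    (e3r : r3 = x + t3 • v) (e3b : σ r3 = x + s3 • u)
    (hs12 : 0 < s1 * s2) (hs13 : 0 < s1 * s3)
    (h12 : |s1| < |s2|) (h23 : |s2| < |s3|)
    (hsm1 : 0 < s1 * t1 * ⟪u, v⟫_ℝ) (hbg2 : s2 * t2 * ⟪u, v⟫_ℝ < 0)
    (hsm3 : 0 < s3 * t3 * ⟪u, v⟫_ℝ)
    (hadj : ∀ b ∈ B, ∀ s : ℝ, b = x + s • u → 0 < s * s1 → |s1| < |s| → |s| < |s2| → False) :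
    ∃ σ', IsBM B R σ' ∧
      R.sup' hRne (fun r => dist r (σ' r)) ≤ R.sup' hRne (fun r => dist r (σ r)) ∧
      ∑ r ∈ R, dist r (σ' r) ^ 2 < ∑ r ∈ R, dist r (σ r) ^ 2 := by
  classical
  set c := ⟪u, v⟫_ℝ with hcdef
  -- basic nonzero facts
  have hs1 : s1 ≠ 0 := fun h => by rw [h] at hsm1; simp at hsm1
  have hs2 : s2 ≠ 0 := fun h => by rw [h] at hbg2; simp at hbg2
  have hs3 : s3 ≠ 0 := fun h => by rw [h] at hsm3; simp at hsm3
  have ht1 : t1 ≠ 0 := fun h => by rw [h] at hsm1; simp at hsm1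
  have ht2 : t2 ≠ 0 := fun h => by rw [h] at hbg2; simp at hbg2
  have ht3 : t3 ≠ 0 := fun h => by rw [h] at hsm3; simp at hsm3
  have hc0 : c ≠ 0 := fun h => by rw [h] at hsm1; simp at hsm1
  have hc2 : 0 < c ^ 2 := by positivity
  set g := |c| with hgdef
  have hg0 : 0 < g := abs_pos.2 hc0
  have hg1 : g < 1 := abs_inner_lt_one hu hv hnp
  have hne12 : r1 ≠ r2 := by
    intro h
    have : s1 = s2 := by
      have := e1b.symm.trans (by rw [h, e2b])
      exact (blue_eq_iff hnp).1 this
    rw [this] at h12; exact lt_irrefl _ h12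
  have hne13 : r1 ≠ r3 := by
    intro h
    have : s1 = s3 := by
      have := e1b.symm.trans (by rw [h, e3b])
      exact (blue_eq_iff hnp).1 this
    rw [this] at h12
    exact lt_irrefl _ (lt_trans h12 h23)
  have hne23 : r2 ≠ r3 := by
    intro h
    have : s2 = s3 := by
      have := e2b.symm.trans (by rw [h, e3b])
      exact (blue_eq_iff hnp).1 this
    rw [this] at h23; exact lt_irrefl _ h23
  -- red side signs
  have ht1t2 : t1 * t2 < 0 := t_sign_flip hs12 hsm1 hbg2
  have ht1t3 : 0 < t1 * t3 := t_sign_keep hs13 hsm1 hsm3 ht1 ht3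
  have hd13 : |t1| < |t3| := by
    have htne : t1 ≠ t3 := fun h => hne13 (by rw [e1r, e3r, h])
    rcases lt_or_ge |t1| |t3| with h | h
    · exact h
    exfalso
    have hlt : |t3| < |t1| :=
      lt_of_le_of_ne h (fun he => htne (same_sign_abs_eq (mul_comm t1 t3 ▸ ht1t3) he).symm)
    have := op_lemma hnp hσ hr3 hr1 hne13.symm e3r e3b e1r e1b (mul_comm s1 s3 ▸ hs13)
      (mul_comm t1 t3 ▸ ht1t3) hlt
    have h13 : |s1| < |s3| := lt_trans h12 h23
    linarith
  -- the swapped matching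
  set σ' := Function.update (Function.update σ r1 (σ r2)) r2 (σ r1) with hσ'def
  have hσ'r1 : σ' r1 = σ r2 := by
    rw [hσ'def, Function.update_of_ne hne12, Function.update_self]
  have hσ'r2 : σ' r2 = σ r1 := Function.update_self _ _ _
  have hσ'other : ∀ r, r ≠ r1 → r ≠ r2 → σ' r = σ r := by
    intro r hne1 hne2
    rw [hσ'def, Function.update_of_ne hne2, Function.update_of_ne hne1]
  have hbij : Set.BijOn σ' (↑R) ↑B := by
    rw [hσ'def]; exact bijOn_swap_update hσ.1 hr1 hr2 hne12
  have hs2ne1 : s2 ≠ s1 := fun h => by rw [h] at h12; exact lt_irrefl _ h12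
  -- new-new disjointness
  have new12 : segment ℝ r1 (σ' r1) ∩ segment ℝ r2 (σ' r2) = ∅ := by
    rw [hσ'r1, hσ'r2, e2b, e1b, e1r, e2r]
    exact disj_red_sides hnp ht1t2 hs2ne1
  -- new small edge (s2, t1) vs old edges
  have new1 : ∀ r ∈ R, r ≠ r1 → r ≠ r2 →
      segment ℝ r1 (σ' r1) ∩ segment ℝ r (σ r) = ∅ := by
    intro r hrR hne1 hne2
    obtain ⟨t, ht0, her⟩ := hR r hrR
    obtain ⟨s, hs0, heb⟩ := hB (σ r) (hσ.1.mapsTo hrR)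
    have htne1 : t ≠ t1 := fun h => hne1 (by rw [her, e1r, h])
    have htne2 : t ≠ t2 := fun h => hne2 (by rw [her, e2r, h])
    have hsne1 : s ≠ s1 := fun h =>
      hne1 (hσ.1.injOn hrR hr1 (by rw [heb, e1b, h]))
    have hsne2 : s ≠ s2 := fun h =>
      hne2 (hσ.1.injOn hrR hr2 (by rw [heb, e2b, h]))
    rw [hσ'r1, e2b, heb, e1r, her]
    by_cases hss : 0 < s * s2
    · by_cases htt : 0 < t * t1
      · -- same (small) sector
        have hss1 : 0 < s * s1 := pos_chain hss (mul_comm s1 s2 ▸ hs12)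
        have habs1 : |s| ≠ |s1| := fun he => hsne1 (same_sign_abs_eq hss1 he)
        have habs2 : |s| ≠ |s2| := fun he => hsne2 (same_sign_abs_eq hss he)
        rcases lt_trichotomy |s| |s2| with hlt2 | heq | hgt2
        · have hlt1 : |s| < |s1| := by
            rcases lt_trichotomy |s| |s1| with h | h | h
            · exact h
            · exact absurd h habs1
            · exact (hadj (σ r) (hσ.1.mapsTo hrR) s heb hss1 h hlt2).elim
          have htlt : |t| < |t1| := by
            rcases lt_or_ge |t| |t1| with h | h
            · exact h
            exfalso
            have h' : |t1| < |t| :=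
              lt_of_le_of_ne h (fun he => htne1 (same_sign_abs_eq (mul_comm t t1 ▸ htt) he).symm)
            have := op_lemma hnp hσ hr1 hrR hne1.symm e1r e1b her heb
              (mul_comm s s1 ▸ hss1) (mul_comm t t1 ▸ htt) h'
            linarith
          rw [Set.inter_comm]
          exact disj_nested hnp hss htt hlt2 htlt
        · exact absurd heq habs2
        · have h1lt : |s1| < |s| := lt_trans h12 hgt2
          have htgt : |t1| < |t| := by
            rcases lt_or_ge |t1| |t| with h | h
            · exact h
            exfalso
            have h' : |t| < |t1| :=
              lt_of_le_of_ne h (fun he => htne1 (same_sign_abs_eq htt he))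
            have := op_lemma hnp hσ hrR hr1 hne1 her heb e1r e1b
              hss1 htt h'
            linarith
          exact disj_nested hnp (mul_comm s s2 ▸ hss) (mul_comm t t1 ▸ htt) hgt2 htgt
      · have htt' : t * t1 < 0 :=
          lt_of_le_of_ne (not_lt.1 htt) (mul_ne_zero ht0 ht1)
        exact disj_red_sides hnp (mul_comm t t1 ▸ htt') (fun h => hsne2 h.symm)
    · have hss' : s * s2 < 0 :=
        lt_of_le_of_ne (not_lt.1 hss) (mul_ne_zero hs0 hs2)
      exact disj_blue_sides hnp (mul_comm s s2 ▸ hss') (fun h => htne1 h.symm)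
  -- new big edge (s1, t2) vs old edges
  have new2 : ∀ r ∈ R, r ≠ r1 → r ≠ r2 →
      segment ℝ r2 (σ' r2) ∩ segment ℝ r (σ r) = ∅ := by
    intro r hrR hne1 hne2
    obtain ⟨t, ht0, her⟩ := hR r hrR
    obtain ⟨s, hs0, heb⟩ := hB (σ r) (hσ.1.mapsTo hrR)
    have htne1 : t ≠ t1 := fun h => hne1 (by rw [her, e1r, h])
    have htne2 : t ≠ t2 := fun h => hne2 (by rw [her, e2r, h])
    have hsne1 : s ≠ s1 := fun h =>
      hne1 (hσ.1.injOn hrR hr1 (by rw [heb, e1b, h]))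
    have hsne2 : s ≠ s2 := fun h =>
      hne2 (hσ.1.injOn hrR hr2 (by rw [heb, e2b, h]))
    rw [hσ'r2, e1b, heb, e2r, her]
    by_cases hss : 0 < s * s1
    · by_cases htt : 0 < t * t2
      · -- same (big) sector
        have hss2 : 0 < s * s2 := pos_chain hss hs12
        have habs1 : |s| ≠ |s1| := fun he => hsne1 (same_sign_abs_eq hss he)
        have habs2 : |s| ≠ |s2| := fun he => hsne2 (same_sign_abs_eq hss2 he)
        have hnobet : ¬ (|s1| < |s| ∧ |s| < |s2|) := by
          rintro ⟨ha, hb⟩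
          exact hadj (σ r) (hσ.1.mapsTo hrR) s heb hss ha hb
        rcases lt_trichotomy |s| |s1| with hlt1 | heq | hgt1
        · -- |s| < |s1| < |s2| : need |t| < |t2|
          have hlt2 : |s| < |s2| := lt_trans hlt1 h12
          have htlt : |t| < |t2| := by
            rcases lt_or_ge |t| |t2| with h | h
            · exact h
            exfalso
            have h' : |t2| < |t| :=
              lt_of_le_of_ne h (fun he => htne2 (same_sign_abs_eq (mul_comm t t2 ▸ htt) he).symm)
            have := op_lemma hnp hσ hr2 hrR hne2.symm e2r e2b her heb
              (mul_comm s s2 ▸ hss2) (mul_comm t t2 ▸ htt) h'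
            linarith
          rw [Set.inter_comm]
          exact disj_nested hnp hss htt hlt1 htlt
        · exact absurd heq habs1
        · have hgt2 : |s2| < |s| := by
            rcases lt_trichotomy |s| |s2| with h | h | h
            · exact (hnobet ⟨hgt1, h⟩).elim
            · exact absurd h habs2
            · exact h
          have htgt : |t2| < |t| := by
            rcases lt_or_ge |t2| |t| with h | h
            · exact h
            exfalso
            have h' : |t| < |t2| :=
              lt_of_le_of_ne h (fun he => htne2 (same_sign_abs_eq htt he))
            have := op_lemma hnp hσ hrR hr2 hne2 her heb e2r e2b
              hss2 htt h'
            linarith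
          exact disj_nested hnp (mul_comm s s1 ▸ hss) (mul_comm t t2 ▸ htt) hgt1 htgt
      · have htt' : t * t2 < 0 :=
          lt_of_le_of_ne (not_lt.1 htt) (mul_ne_zero ht0 ht2)
        exact disj_red_sides hnp (mul_comm t t2 ▸ htt') (fun h => hsne1 h.symm)
    · have hss' : s * s1 < 0 :=
        lt_of_le_of_ne (not_lt.1 hss) (mul_ne_zero hs0 hs1)
      exact disj_blue_sides hnp (mul_comm s s1 ▸ hss') (fun h => htne2 h.symm)
  have hcross : ∀ r ∈ R, ∀ r' ∈ R, r ≠ r' →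
      segment ℝ r (σ' r) ∩ segment ℝ r' (σ' r') = ∅ := by
    intro r hrR r' hr'R hne
    by_cases ha1 : r = r1
    · by_cases hb2 : r' = r2
      · rw [ha1, hb2]; exact new12
      · by_cases hb1 : r' = r1
        · exact absurd (ha1.trans hb1.symm) hne
        · rw [ha1, hσ'other r' hb1 hb2]; exact new1 r' hr'R hb1 hb2
    · by_cases ha2 : r = r2
      · by_cases hb1 : r' = r1
        · rw [ha2, hb1, Set.inter_comm]; exact new12
        · by_cases hb2 : r' = r2
          · exact absurd (ha2.trans hb2.symm) hne
          · rw [ha2, hσ'other r' hb1 hb2]; exact new2 r' hr'R hb1 hb2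
      · by_cases hb1 : r' = r1
        · rw [hb1, hσ'other r ha1 ha2, Set.inter_comm]; exact new1 r hrR ha1 ha2
        · by_cases hb2 : r' = r2
          · rw [hb2, hσ'other r ha1 ha2, Set.inter_comm]; exact new2 r hrR ha1 ha2
          · rw [hσ'other r ha1 ha2, hσ'other r' hb1 hb2]
            exact hσ.2 r hrR r' hr'R hne
  -- length bookkeeping
  have hsm2' : 0 < s2 * t1 * c := edge_flip_pos hs12 hsm1
  have hbg1' : s1 * t2 * c < 0 := edge_flip_neg hs12 hbg2
  have Eq1 : s2 * t1 * c = |s2| * |t1| * g := by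
    rw [hgdef, ← abs_mul, ← abs_mul, abs_of_pos hsm2']
  have Eq2 : s1 * t1 * c = |s1| * |t1| * g := by
    rw [hgdef, ← abs_mul, ← abs_mul, abs_of_pos hsm1]
  have Eq3 : s3 * t3 * c = |s3| * |t3| * g := by
    rw [hgdef, ← abs_mul, ← abs_mul, abs_of_pos hsm3]
  have Eq4 : s2 * t2 * c = -(|s2| * |t2| * g) := by
    rw [hgdef, ← abs_mul, ← abs_mul, abs_of_neg hbg2]; ring
  have Eq5 : s1 * t2 * c = -(|s1| * |t2| * g) := by
    rw [hgdef, ← abs_mul, ← abs_mul, abs_of_neg hbg1']; ring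
  have dNew1 : dist r1 (σ' r1) ^ 2 = |s2| ^ 2 + |t1| ^ 2 - 2 * g * |s2| * |t1| := by
    rw [hσ'r1, e2b, e1r, dist_edge hu hv]
    linear_combination (-1) * sq_abs s2 + (-1) * sq_abs t1 - 2 * Eq1
  have dNew2 : dist r2 (σ' r2) ^ 2 = |s1| ^ 2 + |t2| ^ 2 + 2 * g * |s1| * |t2| := by
    rw [hσ'r2, e1b, e2r, dist_edge hu hv]
    linear_combination (-1) * sq_abs s1 + (-1) * sq_abs t2 - 2 * Eq5
  have dOld1 : dist r1 (σ r1) ^ 2 = |s1| ^ 2 + |t1| ^ 2 - 2 * g * |s1| * |t1| := by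
    rw [e1b, e1r, dist_edge hu hv]
    linear_combination (-1) * sq_abs s1 + (-1) * sq_abs t1 - 2 * Eq2
  have dOld2 : dist r2 (σ r2) ^ 2 = |s2| ^ 2 + |t2| ^ 2 + 2 * g * |s2| * |t2| := by
    rw [e2b, e2r, dist_edge hu hv]
    linear_combination (-1) * sq_abs s2 + (-1) * sq_abs t2 - 2 * Eq4
  have dOld3 : dist r3 (σ r3) ^ 2 = |s3| ^ 2 + |t3| ^ 2 - 2 * g * |s3| * |t3| := by
    rw [e3b, e3r, dist_edge hu hv]
    linear_combination (-1) * sq_abs s3 + (-1) * sq_abs t3 - 2 * Eq3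
  set M := R.sup' hRne (fun r => dist r (σ r)) with hMdef
  have hMr : ∀ r ∈ R, dist r (σ r) ≤ M := fun r hr => by
    rw [hMdef]; exact Finset.le_sup' (fun q => dist q (σ q)) hr
  have hM1 : dist r1 (σ r1) ≤ M := hMr r1 hr1
  have hM2 : dist r2 (σ r2) ≤ M := hMr r2 hr2
  have hM3 : dist r3 (σ r3) ≤ M := hMr r3 hr3
  have hM0 : 0 ≤ M := le_trans dist_nonneg hM1
  have hsup : R.sup' hRne (fun r => dist r (σ' r)) ≤ M := by
    apply Finset.sup'_le
    intro r hrR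
    by_cases ha1 : r = r1
    · rw [ha1]
      apply le_of_sq_le_sq' dist_nonneg hM0
      rw [dNew1]
      have hle := claimC hg0 hg1 (abs_pos.2 hs1) h12 h23 (abs_pos.2 ht1) hd13
      have hA : |s1| ^ 2 + |t1| ^ 2 - 2 * g * |s1| * |t1| ≤ M ^ 2 := by
        rw [← dOld1]; exact pow_le_pow_left₀ dist_nonneg hM1 2
      have hBb : |s2| ^ 2 ≤ M ^ 2 := by
        have h2 : dist r2 (σ r2) ^ 2 ≤ M ^ 2 := pow_le_pow_left₀ dist_nonneg hM2 2
        rw [dOld2] at h2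
        exact sq_le_of_big hg0.le (abs_nonneg s2) (abs_nonneg t2) h2
      have hC : |s3| ^ 2 + |t3| ^ 2 - 2 * g * |s3| * |t3| ≤ M ^ 2 := by
        rw [← dOld3]; exact pow_le_pow_left₀ dist_nonneg hM3 2
      exact le_trans hle (max_le hA (max_le hBb hC))
    · by_cases ha2 : r = r2
      · rw [ha2]
        apply le_trans ?_ hM2
        apply le_of_sq_le_sq' dist_nonneg dist_nonneg
        rw [dNew2, dOld2]
        exact mono_big hg0.le h12.le (abs_nonneg s1) (abs_nonneg t2)
      · rw [hσ'other r ha1 ha2]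
        exact hMr r hrR
  have hr2' : r2 ∈ R.erase r1 := Finset.mem_erase.2 ⟨hne12.symm, hr2⟩
  have E1 : dist r1 (σ' r1) ^ 2 + (dist r2 (σ' r2) ^ 2 +
      ∑ r ∈ (R.erase r1).erase r2, dist r (σ' r) ^ 2) = ∑ r ∈ R, dist r (σ' r) ^ 2 := by
    rw [Finset.add_sum_erase _ (fun r => dist r (σ' r) ^ 2) hr2',
      Finset.add_sum_erase _ (fun r => dist r (σ' r) ^ 2) hr1]
  have E2 : dist r1 (σ r1) ^ 2 + (dist r2 (σ r2) ^ 2 +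
      ∑ r ∈ (R.erase r1).erase r2, dist r (σ r) ^ 2) = ∑ r ∈ R, dist r (σ r) ^ 2 := by
    rw [Finset.add_sum_erase _ (fun r => dist r (σ r) ^ 2) hr2',
      Finset.add_sum_erase _ (fun r => dist r (σ r) ^ 2) hr1]
  have Etail : ∑ r ∈ (R.erase r1).erase r2, dist r (σ' r) ^ 2 =
      ∑ r ∈ (R.erase r1).erase r2, dist r (σ r) ^ 2 := by
    apply Finset.sum_congr rfl
    intro r hrr
    have h2 : r ≠ r2 := (Finset.mem_erase.1 hrr).1
    have h1 : r ≠ r1 := (Finset.mem_erase.1 (Finset.mem_of_mem_erase hrr)).1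
    rw [hσ'other r h1 h2]
  have hstrict : dist r1 (σ' r1) ^ 2 + dist r2 (σ' r2) ^ 2 <
      dist r1 (σ r1) ^ 2 + dist r2 (σ r2) ^ 2 := by
    rw [dNew1, dNew2, dOld1, dOld2]
    exact phi_drop hg0 h12 (abs_pos.2 ht1) (abs_pos.2 ht2)
  refine ⟨σ', ⟨hbij, hcross⟩, hsup, ?_⟩
  rw [← E1, ← E2, Etail]
  linarith

end Swap


section SwapRed
variable {x u v : Pt} {B R : Finset Pt} {σ : Pt → Pt}

lemma swap_red (hu : ‖u‖ = 1) (hv : ‖v‖ = 1) (hnp : det2 u v ≠ 0)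
    (hRne : R.Nonempty) (hσ : IsBM B R σ)
    (hB : ∀ b ∈ B, ∃ s : ℝ, s ≠ 0 ∧ b = x + s • u)
    (hR : ∀ r ∈ R, ∃ t : ℝ, t ≠ 0 ∧ r = x + t • v)
    {r1 r2 r3 : Pt} (hr1 : r1 ∈ R) (hr2 : r2 ∈ R) (hr3 : r3 ∈ R)
    {s1 t1 s2 t2 s3 t3 : ℝ}
    (e1r : r1 = x + t1 • v) (e1b : σ r1 = x + s1 • u)
    (e2r : r2 = x + t2 • v) (e2b : σ r2 = x + s2 • u)
    (e3r : r3 = x + t3 • v) (e3b : σ r3 = x + s3 • u)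
    (ht12 : 0 < t1 * t2) (ht13 : 0 < t1 * t3)
    (h12 : |t1| < |t2|) (h23 : |t2| < |t3|)
    (hsm1 : 0 < s1 * t1 * ⟪u, v⟫_ℝ) (hbg2 : s2 * t2 * ⟪u, v⟫_ℝ < 0)
    (hsm3 : 0 < s3 * t3 * ⟪u, v⟫_ℝ)
    (hadj : ∀ r ∈ R, ∀ t : ℝ, r = x + t • v → 0 < t * t1 → |t1| < |t| → |t| < |t2| → False) :
    ∃ σ', IsBM B R σ' ∧
      R.sup' hRne (fun r => dist r (σ' r)) ≤ R.sup' hRne (fun r => dist r (σ r)) ∧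
      ∑ r ∈ R, dist r (σ' r) ^ 2 < ∑ r ∈ R, dist r (σ r) ^ 2 := by
  classical
  set c := ⟪u, v⟫_ℝ with hcdef
  have hs1 : s1 ≠ 0 := fun h => by rw [h] at hsm1; simp at hsm1
  have hs2 : s2 ≠ 0 := fun h => by rw [h] at hbg2; simp at hbg2
  have hs3 : s3 ≠ 0 := fun h => by rw [h] at hsm3; simp at hsm3
  have ht1 : t1 ≠ 0 := fun h => by rw [h] at hsm1; simp at hsm1
  have ht2 : t2 ≠ 0 := fun h => by rw [h] at hbg2; simp at hbg2
  have ht3 : t3 ≠ 0 := fun h => by rw [h] at hsm3; simp at hsm3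
  have hc0 : c ≠ 0 := fun h => by rw [h] at hsm1; simp at hsm1
  have hc2 : 0 < c ^ 2 := by positivity
  set g := |c| with hgdef
  have hg0 : 0 < g := abs_pos.2 hc0
  have hg1 : g < 1 := abs_inner_lt_one hu hv hnp
  have hne12 : r1 ≠ r2 := by
    intro h
    have : t1 = t2 := (red_eq_iff hnp).1 (e1r.symm.trans (by rw [h, e2r]))
    rw [this] at h12; exact lt_irrefl _ h12
  have hne13 : r1 ≠ r3 := by
    intro h
    have : t1 = t3 := (red_eq_iff hnp).1 (e1r.symm.trans (by rw [h, e3r]))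
    rw [this] at h12
    exact lt_irrefl _ (lt_trans h12 h23)
  have hne23 : r2 ≠ r3 := by
    intro h
    have : t2 = t3 := (red_eq_iff hnp).1 (e2r.symm.trans (by rw [h, e3r]))
    rw [this] at h23; exact lt_irrefl _ h23
  -- blue side signs
  have hs1s2 : s1 * s2 < 0 := s_sign_flip ht12 hsm1 hbg2
  have hs1s3 : 0 < s1 * s3 := s_sign_keep ht13 hsm1 hsm3 hs1 hs3
  have hd13 : |s1| < |s3| :=
    op_lemma hnp hσ hr1 hr3 hne13 e1r e1b e3r e3b hs1s3 ht13 (lt_trans h12 h23)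
  -- the swapped matching
  set σ' := Function.update (Function.update σ r1 (σ r2)) r2 (σ r1) with hσ'def
  have hσ'r1 : σ' r1 = σ r2 := by
    rw [hσ'def, Function.update_of_ne hne12, Function.update_self]
  have hσ'r2 : σ' r2 = σ r1 := Function.update_self _ _ _
  have hσ'other : ∀ r, r ≠ r1 → r ≠ r2 → σ' r = σ r := by
    intro r hne1 hne2
    rw [hσ'def, Function.update_of_ne hne2, Function.update_of_ne hne1]
  have hbij : Set.BijOn σ' (↑R) ↑B := by
    rw [hσ'def]; exact bijOn_swap_update hσ.1 hr1 hr2 hne12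
  have ht2ne1 : t2 ≠ t1 := fun h => by rw [h] at h12; exact lt_irrefl _ h12
  have new12 : segment ℝ r1 (σ' r1) ∩ segment ℝ r2 (σ' r2) = ∅ := by
    rw [hσ'r1, hσ'r2, e2b, e1b, e1r, e2r]
    exact disj_blue_sides hnp (mul_comm s1 s2 ▸ hs1s2) (fun h => ht2ne1 (h.symm ▸ rfl))
  -- new big edge (s2, t1) vs old edges
  have new1 : ∀ r ∈ R, r ≠ r1 → r ≠ r2 →
      segment ℝ r1 (σ' r1) ∩ segment ℝ r (σ r) = ∅ := by
    intro r hrR hne1 hne2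
    obtain ⟨t, ht0, her⟩ := hR r hrR
    obtain ⟨s, hs0, heb⟩ := hB (σ r) (hσ.1.mapsTo hrR)
    have htne1 : t ≠ t1 := fun h => hne1 (by rw [her, e1r, h])
    have htne2 : t ≠ t2 := fun h => hne2 (by rw [her, e2r, h])
    have hsne1 : s ≠ s1 := fun h =>
      hne1 (hσ.1.injOn hrR hr1 (by rw [heb, e1b, h]))
    have hsne2 : s ≠ s2 := fun h =>
      hne2 (hσ.1.injOn hrR hr2 (by rw [heb, e2b, h]))
    rw [hσ'r1, e2b, heb, e1r, her]
    by_cases hss : 0 < s * s2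
    · by_cases htt : 0 < t * t1
      · -- same (big) sector
        have htt2 : 0 < t * t2 := pos_chain htt ht12
        have habs1 : |t| ≠ |t1| := fun he => htne1 (same_sign_abs_eq htt he)
        have habs2 : |t| ≠ |t2| := fun he => htne2 (same_sign_abs_eq htt2 he)
        have hnobet : ¬ (|t1| < |t| ∧ |t| < |t2|) := by
          rintro ⟨ha, hb⟩
          exact hadj r hrR t her htt ha hb
        rcases lt_trichotomy |t| |t1| with hlt1 | heq | hgt1
        · have hslt : |s| < |s2| :=
            op_lemma hnp hσ hrR hr2 hne2 her heb e2r e2b hss htt2 (lt_trans hlt1 h12)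
          rw [Set.inter_comm]
          exact disj_nested hnp hss htt hslt hlt1
        · exact absurd heq habs1
        · have hgt2 : |t2| < |t| := by
            rcases lt_trichotomy |t| |t2| with h | h | h
            · exact (hnobet ⟨hgt1, h⟩).elim
            · exact absurd h habs2
            · exact h
          have hsgt : |s2| < |s| :=
            op_lemma hnp hσ hr2 hrR hne2.symm e2r e2b her heb
              (mul_comm s s2 ▸ hss) (mul_comm t t2 ▸ htt2) hgt2
          exact disj_nested hnp (mul_comm s s2 ▸ hss) (mul_comm t t1 ▸ htt) hsgt hgt1
      · have htt' : t * t1 < 0 :=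
          lt_of_le_of_ne (not_lt.1 htt) (mul_ne_zero ht0 ht1)
        exact disj_red_sides hnp (mul_comm t t1 ▸ htt') (fun h => hsne2 h.symm)
    · have hss' : s * s2 < 0 :=
        lt_of_le_of_ne (not_lt.1 hss) (mul_ne_zero hs0 hs2)
      exact disj_blue_sides hnp (mul_comm s s2 ▸ hss') (fun h => htne1 h.symm)
  -- new small edge (s1, t2) vs old edges
  have new2 : ∀ r ∈ R, r ≠ r1 → r ≠ r2 →
      segment ℝ r2 (σ' r2) ∩ segment ℝ r (σ r) = ∅ := by
    intro r hrR hne1 hne2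
    obtain ⟨t, ht0, her⟩ := hR r hrR
    obtain ⟨s, hs0, heb⟩ := hB (σ r) (hσ.1.mapsTo hrR)
    have htne1 : t ≠ t1 := fun h => hne1 (by rw [her, e1r, h])
    have htne2 : t ≠ t2 := fun h => hne2 (by rw [her, e2r, h])
    have hsne1 : s ≠ s1 := fun h =>
      hne1 (hσ.1.injOn hrR hr1 (by rw [heb, e1b, h]))
    have hsne2 : s ≠ s2 := fun h =>
      hne2 (hσ.1.injOn hrR hr2 (by rw [heb, e2b, h]))
    rw [hσ'r2, e1b, heb, e2r, her]
    by_cases hss : 0 < s * s1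
    · by_cases htt : 0 < t * t2
      · -- same (small) sector
        have htt1 : 0 < t * t1 := pos_chain htt (mul_comm t1 t2 ▸ ht12)
        have habs1 : |t| ≠ |t1| := fun he => htne1 (same_sign_abs_eq htt1 he)
        have habs2 : |t| ≠ |t2| := fun he => htne2 (same_sign_abs_eq htt he)
        have hnobet : ¬ (|t1| < |t| ∧ |t| < |t2|) := by
          rintro ⟨ha, hb⟩
          exact hadj r hrR t her htt1 ha hb
        rcases lt_trichotomy |t| |t1| with hlt1 | heq | hgt1
        · have hslt : |s| < |s1| :=
            op_lemma hnp hσ hrR hr1 hne1 her heb e1r e1b hss htt1 hlt1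
          rw [Set.inter_comm]
          exact disj_nested hnp hss htt hslt (lt_trans hlt1 h12)
        · exact absurd heq habs1
        · have hgt2 : |t2| < |t| := by
            rcases lt_trichotomy |t| |t2| with h | h | h
            · exact (hnobet ⟨hgt1, h⟩).elim
            · exact absurd h habs2
            · exact h
          have hsgt : |s1| < |s| :=
            op_lemma hnp hσ hr1 hrR hne1.symm e1r e1b her heb
              (mul_comm s s1 ▸ hss) (mul_comm t t1 ▸ htt1) hgt1
          exact disj_nested hnp (mul_comm s s1 ▸ hss) (mul_comm t t2 ▸ htt) hsgt hgt2
      · have htt' : t * t2 < 0 :=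
          lt_of_le_of_ne (not_lt.1 htt) (mul_ne_zero ht0 ht2)
        exact disj_red_sides hnp (mul_comm t t2 ▸ htt') (fun h => hsne1 h.symm)
    · have hss' : s * s1 < 0 :=
        lt_of_le_of_ne (not_lt.1 hss) (mul_ne_zero hs0 hs1)
      exact disj_blue_sides hnp (mul_comm s s1 ▸ hss') (fun h => htne2 h.symm)
  have hcross : ∀ r ∈ R, ∀ r' ∈ R, r ≠ r' →
      segment ℝ r (σ' r) ∩ segment ℝ r' (σ' r') = ∅ := by
    intro r hrR r' hr'R hne
    by_cases ha1 : r = r1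
    · by_cases hb2 : r' = r2
      · rw [ha1, hb2]; exact new12
      · by_cases hb1 : r' = r1
        · exact absurd (ha1.trans hb1.symm) hne
        · rw [ha1, hσ'other r' hb1 hb2]; exact new1 r' hr'R hb1 hb2
    · by_cases ha2 : r = r2
      · by_cases hb1 : r' = r1
        · rw [ha2, hb1, Set.inter_comm]; exact new12
        · by_cases hb2 : r' = r2
          · exact absurd (ha2.trans hb2.symm) hne
          · rw [ha2, hσ'other r' hb1 hb2]; exact new2 r' hr'R hb1 hb2
      · by_cases hb1 : r' = r1
        · rw [hb1, hσ'other r ha1 ha2, Set.inter_comm]; exact new1 r hrR ha1 ha2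
        · by_cases hb2 : r' = r2
          · rw [hb2, hσ'other r ha1 ha2, Set.inter_comm]; exact new2 r hrR ha1 ha2
          · rw [hσ'other r ha1 ha2, hσ'other r' hb1 hb2]
            exact hσ.2 r hrR r' hr'R hne
  -- lengths
  have hbg1' : s2 * t1 * c < 0 := edge_flip_neg' ht12 hbg2
  have hsm2' : 0 < s1 * t2 * c := edge_flip_pos' ht12 hsm1
  have Eq1 : s2 * t1 * c = -(|s2| * |t1| * g) := by
    rw [hgdef, ← abs_mul, ← abs_mul, abs_of_neg hbg1']; ring
  have Eq2 : s1 * t1 * c = |s1| * |t1| * g := by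
    rw [hgdef, ← abs_mul, ← abs_mul, abs_of_pos hsm1]
  have Eq3 : s3 * t3 * c = |s3| * |t3| * g := by
    rw [hgdef, ← abs_mul, ← abs_mul, abs_of_pos hsm3]
  have Eq4 : s2 * t2 * c = -(|s2| * |t2| * g) := by
    rw [hgdef, ← abs_mul, ← abs_mul, abs_of_neg hbg2]; ring
  have Eq5 : s1 * t2 * c = |s1| * |t2| * g := by
    rw [hgdef, ← abs_mul, ← abs_mul, abs_of_pos hsm2']
  have dNew1 : dist r1 (σ' r1) ^ 2 = |s2| ^ 2 + |t1| ^ 2 + 2 * g * |s2| * |t1| := by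
    rw [hσ'r1, e2b, e1r, dist_edge hu hv]
    linear_combination (-1) * sq_abs s2 + (-1) * sq_abs t1 - 2 * Eq1
  have dNew2 : dist r2 (σ' r2) ^ 2 = |t2| ^ 2 + |s1| ^ 2 - 2 * g * |t2| * |s1| := by
    rw [hσ'r2, e1b, e2r, dist_edge hu hv]
    linear_combination (-1) * sq_abs s1 + (-1) * sq_abs t2 - 2 * Eq5
  have dOld1 : dist r1 (σ r1) ^ 2 = |s1| ^ 2 + |t1| ^ 2 - 2 * g * |s1| * |t1| := by
    rw [e1b, e1r, dist_edge hu hv]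
    linear_combination (-1) * sq_abs s1 + (-1) * sq_abs t1 - 2 * Eq2
  have dOld2 : dist r2 (σ r2) ^ 2 = |s2| ^ 2 + |t2| ^ 2 + 2 * g * |s2| * |t2| := by
    rw [e2b, e2r, dist_edge hu hv]
    linear_combination (-1) * sq_abs s2 + (-1) * sq_abs t2 - 2 * Eq4
  have dOld3 : dist r3 (σ r3) ^ 2 = |s3| ^ 2 + |t3| ^ 2 - 2 * g * |s3| * |t3| := by
    rw [e3b, e3r, dist_edge hu hv]
    linear_combination (-1) * sq_abs s3 + (-1) * sq_abs t3 - 2 * Eq3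
  set M := R.sup' hRne (fun r => dist r (σ r)) with hMdef
  have hMr : ∀ r ∈ R, dist r (σ r) ≤ M := fun r hr => by
    rw [hMdef]; exact Finset.le_sup' (fun q => dist q (σ q)) hr
  have hM1 : dist r1 (σ r1) ≤ M := hMr r1 hr1
  have hM2 : dist r2 (σ r2) ≤ M := hMr r2 hr2
  have hM3 : dist r3 (σ r3) ≤ M := hMr r3 hr3
  have hM0 : 0 ≤ M := le_trans dist_nonneg hM1
  have hsup : R.sup' hRne (fun r => dist r (σ' r)) ≤ M := by
    apply Finset.sup'_le
    intro r hrR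
    by_cases ha1 : r = r1
    · rw [ha1]
      apply le_trans ?_ hM2
      apply le_of_sq_le_sq' dist_nonneg dist_nonneg
      rw [dNew1, dOld2]
      exact mono_big2 hg0.le h12.le (abs_nonneg t1) (abs_nonneg s2)
    · by_cases ha2 : r = r2
      · rw [ha2]
        apply le_of_sq_le_sq' dist_nonneg hM0
        rw [dNew2]
        have hle := claimC hg0 hg1 (abs_pos.2 ht1) h12 h23 (abs_pos.2 hs1) hd13
        have hA : |t1| ^ 2 + |s1| ^ 2 - 2 * g * |t1| * |s1| ≤ M ^ 2 := by
          have h2 : dist r1 (σ r1) ^ 2 ≤ M ^ 2 := pow_le_pow_left₀ dist_nonneg hM1 2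
          rw [dOld1] at h2; linarith [h2]
        have hBb : |t2| ^ 2 ≤ M ^ 2 := by
          have h2 : dist r2 (σ r2) ^ 2 ≤ M ^ 2 := pow_le_pow_left₀ dist_nonneg hM2 2
          rw [dOld2] at h2
          exact sq_le_of_big2 hg0.le (abs_nonneg s2) (abs_nonneg t2) h2
        have hC : |t3| ^ 2 + |s3| ^ 2 - 2 * g * |t3| * |s3| ≤ M ^ 2 := by
          have h2 : dist r3 (σ r3) ^ 2 ≤ M ^ 2 := pow_le_pow_left₀ dist_nonneg hM3 2
          rw [dOld3] at h2; linarith [h2]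
        exact le_trans hle (max_le hA (max_le hBb hC))
      · rw [hσ'other r ha1 ha2]
        exact hMr r hrR
  have hr2' : r2 ∈ R.erase r1 := Finset.mem_erase.2 ⟨hne12.symm, hr2⟩
  have E1 : dist r1 (σ' r1) ^ 2 + (dist r2 (σ' r2) ^ 2 +
      ∑ r ∈ (R.erase r1).erase r2, dist r (σ' r) ^ 2) = ∑ r ∈ R, dist r (σ' r) ^ 2 := by
    rw [Finset.add_sum_erase _ (fun r => dist r (σ' r) ^ 2) hr2',
      Finset.add_sum_erase _ (fun r => dist r (σ' r) ^ 2) hr1]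
  have E2 : dist r1 (σ r1) ^ 2 + (dist r2 (σ r2) ^ 2 +
      ∑ r ∈ (R.erase r1).erase r2, dist r (σ r) ^ 2) = ∑ r ∈ R, dist r (σ r) ^ 2 := by
    rw [Finset.add_sum_erase _ (fun r => dist r (σ r) ^ 2) hr2',
      Finset.add_sum_erase _ (fun r => dist r (σ r) ^ 2) hr1]
  have Etail : ∑ r ∈ (R.erase r1).erase r2, dist r (σ' r) ^ 2 =
      ∑ r ∈ (R.erase r1).erase r2, dist r (σ r) ^ 2 := by
    apply Finset.sum_congr rfl
    intro r hrr
    have h2 : r ≠ r2 := (Finset.mem_erase.1 hrr).1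
    have h1 : r ≠ r1 := (Finset.mem_erase.1 (Finset.mem_of_mem_erase hrr)).1
    rw [hσ'other r h1 h2]
  have hstrict : dist r1 (σ' r1) ^ 2 + dist r2 (σ' r2) ^ 2 <
      dist r1 (σ r1) ^ 2 + dist r2 (σ r2) ^ 2 := by
    rw [dNew1, dNew2, dOld1, dOld2]
    exact phi_drop2 hg0 h12 (abs_pos.2 hs1) (abs_pos.2 hs2)
  refine ⟨σ', ⟨hbij, hcross⟩, hsup, ?_⟩
  rw [← E1, ← E2, Etail]
  linarith

end SwapRed

section Consec
variable {x u v : Pt} {B R : Finset Pt} {σ : Pt → Pt}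

lemma consec_blue (hu : ‖u‖ = 1) (hv : ‖v‖ = 1) (hnp : det2 u v ≠ 0)
    (hRne : R.Nonempty) (hσ : IsBM B R σ)
    (hB : ∀ b ∈ B, ∃ s : ℝ, s ≠ 0 ∧ b = x + s • u)
    (hR : ∀ r ∈ R, ∃ t : ℝ, t ≠ 0 ∧ r = x + t • v)
    (hmin2 : ∀ σ', IsBM B R σ' →
      R.sup' hRne (fun r => dist r (σ' r)) ≤ R.sup' hRne (fun r => dist r (σ r)) →
      ∑ r ∈ R, dist r (σ r) ^ 2 ≤ ∑ r ∈ R, dist r (σ' r) ^ 2)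
    {ε : ℝ} (hε : ε = 1 ∨ ε = -1) :
    ConsecOn x (↑B ∪ ↑R) (halfLine x (ε • u))
      {p | p ∈ (↑B ∪ ↑R : Set Pt) ∩ halfLine x (ε • u) ∧ MatchedSmall x u v R σ p} := by
  classical
  intro a ha c hc p hp hap hpc
  obtain ⟨⟨haP, haH⟩, haM⟩ := ha
  obtain ⟨⟨hcP, hcH⟩, hcM⟩ := hc
  obtain ⟨hpP, hpH⟩ := hp
  refine ⟨⟨hpP, hpH⟩, ?_⟩
  by_contra hpM
  have hprod : ∀ {s s' : ℝ}, 0 < ε * s → 0 < ε * s' → 0 < s * s' := by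
    rcases hε with rfl | rfl <;> (intro s s' h h'; nlinarith)
  have hblue : ∀ q : Pt, q ∈ (↑B ∪ ↑R : Set Pt) → q ∈ halfLine x (ε • u) →
      q ∈ B ∧ ∃ s : ℝ, s ≠ 0 ∧ q = x + s • u ∧ 0 < ε * s := by
    intro q hqP hqH
    rcases hqP with hq | hq
    · have hqB : q ∈ B := by exact_mod_cast hq
      obtain ⟨s, hs0, he⟩ := hB q hqB
      refine ⟨hqB, s, hs0, he, (mem_halfLine_blue hnp hε).1 (he ▸ hqH)⟩
    · have hqR : q ∈ R := by exact_mod_cast hq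
      obtain ⟨t, ht0, he⟩ := hR q hqR
      exact absurd (he ▸ hqH) (red_not_blue_halfLine hnp hε ht0)
  obtain ⟨haB, sa, hsa0, haeq, hsaε⟩ := hblue a haP haH
  obtain ⟨hcB, sc, hsc0, hceq, hscε⟩ := hblue c hcP hcH
  obtain ⟨hpB, sp, hsp0, hpeq, hspε⟩ := hblue p hpP hpH
  obtain ⟨ra, hraR, haσ⟩ := hσ.1.surjOn (Finset.mem_coe.2 haB)
  obtain ⟨rc, hrcR, hcσ⟩ := hσ.1.surjOn (Finset.mem_coe.2 hcB)
  obtain ⟨rp, hrpR, hpσ⟩ := hσ.1.surjOn (Finset.mem_coe.2 hpB)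
  have hraR' : ra ∈ R := by exact_mod_cast hraR
  have hrcR' : rc ∈ R := by exact_mod_cast hrcR
  have hrpR' : rp ∈ R := by exact_mod_cast hrpR
  obtain ⟨ta, hta0, hareq⟩ := hR ra hraR'
  obtain ⟨tc, htc0, hcreq⟩ := hR rc hrcR'
  obtain ⟨tp, htp0, hpreq⟩ := hR rp hrpR'
  -- smallness facts
  have hsma : 0 < sa * ta * ⟪u, v⟫_ℝ := by
    have h1 : InSmallSector x u v (σ ra) ra :=
      (matched_blue hnp hσ hR hraR' hsa0 (by rw [haσ]; exact haeq)).1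
        (by rw [haσ]; exact haM)
    rw [haσ, haeq, hareq] at h1
    exact (smallSec_iff hnp hsa0 hta0).1 h1
  have hsmc : 0 < sc * tc * ⟪u, v⟫_ℝ := by
    have h1 : InSmallSector x u v (σ rc) rc :=
      (matched_blue hnp hσ hR hrcR' hsc0 (by rw [hcσ]; exact hceq)).1
        (by rw [hcσ]; exact hcM)
    rw [hcσ, hceq, hcreq] at h1
    exact (smallSec_iff hnp hsc0 htc0).1 h1
  have hipne : ⟪u, v⟫_ℝ ≠ 0 := fun h => by rw [h] at hsma; simp at hsma
  have hbgp : sp * tp * ⟪u, v⟫_ℝ < 0 := by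
    rcases lt_trichotomy (sp * tp * ⟪u, v⟫_ℝ) 0 with h | h | h
    · exact h
    · exact absurd h (mul_ne_zero (mul_ne_zero hsp0 htp0) hipne)
    · exfalso
      apply hpM
      rw [← hpσ]
      apply (matched_blue hnp hσ hR hrpR' hsp0 (by rw [hpσ]; exact hpeq)).2
      rw [hpσ, hpeq, hpreq]
      exact (smallSec_iff hnp hsp0 htp0).2 h
  -- strict orders
  have hane : a ≠ p := fun h => hpM (h ▸ haM)
  have hcne : p ≠ c := fun h => hpM (by rw [h]; exact hcM)
  have hsasp : 0 < sa * sp := hprod hsaε hspε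
  have hspsc : 0 < sp * sc := hprod hspε hscε
  have hap' : |sa| < |sp| := by
    have hle : |sa| ≤ |sp| := by
      rw [← dist_x_blue hu sa, ← dist_x_blue hu sp, ← haeq, ← hpeq] at *
      exact hap
    exact lt_of_le_of_ne hle
      (fun he => hane (by rw [haeq, hpeq, same_sign_abs_eq hsasp he]))
  have hpc' : |sp| < |sc| := by
    have hle : |sp| ≤ |sc| := by
      rw [← dist_x_blue hu sp, ← dist_x_blue hu sc, ← hpeq, ← hceq] at *
      exact hpc
    exact lt_of_le_of_ne hle
      (fun he => hcne (by rw [hpeq, hceq, same_sign_abs_eq hspsc he]))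
  -- select q1 : outermost small point strictly inside p
  set K1 : Finset Pt := B.filter (fun b => b ∈ halfLine x (ε • u) ∧
    |cU x u v b| < |sp| ∧ MatchedSmall x u v R σ b) with hK1
  have haK1 : a ∈ K1 := Finset.mem_filter.2 ⟨haB, haH, by
    rw [haeq, cU_blue hnp]; exact hap', haM⟩
  obtain ⟨q1, hq1K, hq1max⟩ := K1.exists_max_image (fun b => |cU x u v b|) ⟨a, haK1⟩
  obtain ⟨hq1B, hq1H, hq1lt, hq1M⟩ := Finset.mem_filter.1 hq1K
  obtain ⟨s1, hs10, hq1eq⟩ := hB q1 hq1B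
  have hcU1 : cU x u v q1 = s1 := by rw [hq1eq, cU_blue hnp]
  rw [hcU1] at hq1lt
  have hs1ε : 0 < ε * s1 := (mem_halfLine_blue hnp hε).1 (hq1eq ▸ hq1H)
  -- select q2 : innermost point strictly beyond q1 (within p)
  set K2 : Finset Pt := B.filter (fun b => b ∈ halfLine x (ε • u) ∧
    |s1| < |cU x u v b| ∧ |cU x u v b| ≤ |sp|) with hK2
  have hpK2 : p ∈ K2 := Finset.mem_filter.2 ⟨hpB, hpH, by
    rw [hpeq, cU_blue hnp]; exact ⟨hq1lt, le_refl _⟩⟩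
  obtain ⟨q2, hq2K, hq2min⟩ := K2.exists_min_image (fun b => |cU x u v b|) ⟨p, hpK2⟩
  obtain ⟨hq2B, hq2H, hq2gt, hq2le⟩ := Finset.mem_filter.1 hq2K
  obtain ⟨s2, hs20, hq2eq⟩ := hB q2 hq2B
  have hcU2 : cU x u v q2 = s2 := by rw [hq2eq, cU_blue hnp]
  rw [hcU2] at hq2gt hq2le
  have hs2ε : 0 < ε * s2 := (mem_halfLine_blue hnp hε).1 (hq2eq ▸ hq2H)
  -- q2 is not small-matched
  have hq2M : ¬ MatchedSmall x u v R σ q2 := by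
    intro hsm
    have hq2p : q2 ≠ p := fun h => hpM (h ▸ hsm)
    have h2lt : |s2| < |sp| := lt_of_le_of_ne hq2le
      (fun he => hq2p (by rw [hq2eq, hpeq, same_sign_abs_eq (hprod hs2ε hspε) he]))
    have : q2 ∈ K1 := Finset.mem_filter.2 ⟨hq2B, hq2H, by rw [hcU2]; exact h2lt, hsm⟩
    have := hq1max q2 this
    rw [hcU1, hcU2] at this
    exact absurd hq2gt (not_lt.2 this)
  -- partners of q1 and q2
  obtain ⟨r1, hr1R, hr1σ⟩ := hσ.1.surjOn (Finset.mem_coe.2 hq1B)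
  obtain ⟨r2, hr2R, hr2σ⟩ := hσ.1.surjOn (Finset.mem_coe.2 hq2B)
  have hr1R' : r1 ∈ R := by exact_mod_cast hr1R
  have hr2R' : r2 ∈ R := by exact_mod_cast hr2R
  obtain ⟨t1, ht10, hr1eq⟩ := hR r1 hr1R'
  obtain ⟨t2, ht20, hr2eq⟩ := hR r2 hr2R'
  have hsm1 : 0 < s1 * t1 * ⟪u, v⟫_ℝ := by
    have h1 : InSmallSector x u v (σ r1) r1 :=
      (matched_blue hnp hσ hR hr1R' hs10 (by rw [hr1σ]; exact hq1eq)).1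
        (by rw [hr1σ]; exact hq1M)
    rw [hr1σ, hq1eq, hr1eq] at h1
    exact (smallSec_iff hnp hs10 ht10).1 h1
  have hbg2 : s2 * t2 * ⟪u, v⟫_ℝ < 0 := by
    rcases lt_trichotomy (s2 * t2 * ⟪u, v⟫_ℝ) 0 with h | h | h
    · exact h
    · exact absurd h (mul_ne_zero (mul_ne_zero hs20 ht20) hipne)
    · exfalso
      apply hq2M
      rw [← hr2σ]
      apply (matched_blue hnp hσ hR hr2R' hs20 (by rw [hr2σ]; exact hq2eq)).2
      rw [hr2σ, hq2eq, hr2eq]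
      exact (smallSec_iff hnp hs20 ht20).2 h
  -- adjacency
  have hadj : ∀ b ∈ B, ∀ s : ℝ, b = x + s • u → 0 < s * s1 → |s1| < |s| → |s| < |s2| →
      False := by
    intro b hbB s hbeq hss1 hlt1 hlt2
    have hεs : 0 < ε * s := pos_chain hs1ε (mul_comm s s1 ▸ hss1)
    have hbK2 : b ∈ K2 := Finset.mem_filter.2 ⟨hbB, by
      rw [hbeq]; exact (mem_halfLine_blue hnp hε).2 hεs, by
      rw [hbeq, cU_blue hnp]; exact ⟨hlt1, le_trans hlt2.le hq2le⟩⟩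
    have := hq2min b hbK2
    rw [hcU2, hbeq, cU_blue hnp] at this
    exact absurd hlt2 (not_lt.2 this)
  -- apply the swap
  obtain ⟨σ', hσ', hsup, hphi⟩ := swap_blue hu hv hnp hRne hσ hB hR hr1R' hr2R' hrcR'
    hr1eq (hr1σ.trans hq1eq) hr2eq (hr2σ.trans hq2eq) hcreq (hcσ.trans hceq)
    (hprod hs1ε hs2ε) (hprod hs1ε hscε) hq2gt (lt_of_le_of_lt hq2le hpc')
    hsm1 hbg2 hsmc hadj
  have := hmin2 σ' hσ' hsup
  linarith

lemma consec_red (hu : ‖u‖ = 1) (hv : ‖v‖ = 1) (hnp : det2 u v ≠ 0)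
    (hRne : R.Nonempty) (hσ : IsBM B R σ)
    (hB : ∀ b ∈ B, ∃ s : ℝ, s ≠ 0 ∧ b = x + s • u)
    (hR : ∀ r ∈ R, ∃ t : ℝ, t ≠ 0 ∧ r = x + t • v)
    (hmin2 : ∀ σ', IsBM B R σ' →
      R.sup' hRne (fun r => dist r (σ' r)) ≤ R.sup' hRne (fun r => dist r (σ r)) →
      ∑ r ∈ R, dist r (σ r) ^ 2 ≤ ∑ r ∈ R, dist r (σ' r) ^ 2)
    {δ : ℝ} (hδ : δ = 1 ∨ δ = -1) :
    ConsecOn x (↑B ∪ ↑R) (halfLine x (δ • v))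
      {p | p ∈ (↑B ∪ ↑R : Set Pt) ∩ halfLine x (δ • v) ∧ MatchedSmall x u v R σ p} := by
  classical
  intro a ha c hc p hp hap hpc
  obtain ⟨⟨haP, haH⟩, haM⟩ := ha
  obtain ⟨⟨hcP, hcH⟩, hcM⟩ := hc
  obtain ⟨hpP, hpH⟩ := hp
  refine ⟨⟨hpP, hpH⟩, ?_⟩
  by_contra hpM
  have hprod : ∀ {s s' : ℝ}, 0 < δ * s → 0 < δ * s' → 0 < s * s' := by
    rcases hδ with rfl | rfl <;> (intro s s' h h'; nlinarith)
  have hred : ∀ q : Pt, q ∈ (↑B ∪ ↑R : Set Pt) → q ∈ halfLine x (δ • v) →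
      q ∈ R ∧ ∃ t : ℝ, t ≠ 0 ∧ q = x + t • v ∧ 0 < δ * t := by
    intro q hqP hqH
    rcases hqP with hq | hq
    · have hqB : q ∈ B := by exact_mod_cast hq
      obtain ⟨s, hs0, he⟩ := hB q hqB
      exact absurd (he ▸ hqH) (blue_not_red_halfLine hnp hδ hs0)
    · have hqR : q ∈ R := by exact_mod_cast hq
      obtain ⟨t, ht0, he⟩ := hR q hqR
      refine ⟨hqR, t, ht0, he, (mem_halfLine_red hnp hδ).1 (he ▸ hqH)⟩
  obtain ⟨haR, ta, hta0, haeq, htaδ⟩ := hred a haP haH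
  obtain ⟨hcR, tc, htc0, hceq, htcδ⟩ := hred c hcP hcH
  obtain ⟨hpR, tp, htp0, hpeq, htpδ⟩ := hred p hpP hpH
  obtain ⟨sa, hsa0, haσ⟩ := hB (σ a) (hσ.1.mapsTo (Finset.mem_coe.2 haR))
  obtain ⟨sc, hsc0, hcσ⟩ := hB (σ c) (hσ.1.mapsTo (Finset.mem_coe.2 hcR))
  obtain ⟨sp, hsp0, hpσ⟩ := hB (σ p) (hσ.1.mapsTo (Finset.mem_coe.2 hpR))
  have hsma : 0 < sa * ta * ⟪u, v⟫_ℝ := by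
    have h1 : InSmallSector x u v (σ a) a := (matched_red hnp hσ hB hR haR).1 haM
    rw [haσ, haeq] at h1
    exact (smallSec_iff hnp hsa0 hta0).1 h1
  have hsmc : 0 < sc * tc * ⟪u, v⟫_ℝ := by
    have h1 : InSmallSector x u v (σ c) c := (matched_red hnp hσ hB hR hcR).1 hcM
    rw [hcσ, hceq] at h1
    exact (smallSec_iff hnp hsc0 htc0).1 h1
  have hipne : ⟪u, v⟫_ℝ ≠ 0 := fun h => by rw [h] at hsma; simp at hsma
  have hbgp : sp * tp * ⟪u, v⟫_ℝ < 0 := by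
    rcases lt_trichotomy (sp * tp * ⟪u, v⟫_ℝ) 0 with h | h | h
    · exact h
    · exact absurd h (mul_ne_zero (mul_ne_zero hsp0 htp0) hipne)
    · exfalso
      apply hpM
      apply (matched_red hnp hσ hB hR hpR).2
      rw [hpσ, hpeq]
      exact (smallSec_iff hnp hsp0 htp0).2 h
  have hane : a ≠ p := fun h => hpM (h ▸ haM)
  have hcne : p ≠ c := fun h => hpM (by rw [h]; exact hcM)
  have htatp : 0 < ta * tp := hprod htaδ htpδ
  have htptc : 0 < tp * tc := hprod htpδ htcδ
  have hdist_red : ∀ t : ℝ, dist x (x + t • v) = |t| := by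
    intro t
    rw [dist_eq_norm]
    have : x - (x + t • v) = (-t) • v := by module
    rw [this, norm_smul, hv]
    simp
  have hap' : |ta| < |tp| := by
    have hle : |ta| ≤ |tp| := by
      rw [← hdist_red ta, ← hdist_red tp, ← haeq, ← hpeq]
      exact hap
    exact lt_of_le_of_ne hle
      (fun he => hane (by rw [haeq, hpeq, same_sign_abs_eq htatp he]))
  have hpc' : |tp| < |tc| := by
    have hle : |tp| ≤ |tc| := by
      rw [← hdist_red tp, ← hdist_red tc, ← hpeq, ← hceq]
      exact hpc
    exact lt_of_le_of_ne hle
      (fun he => hcne (by rw [hpeq, hceq, same_sign_abs_eq htptc he]))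
  set K1 : Finset Pt := R.filter (fun r => r ∈ halfLine x (δ • v) ∧
    |cV x u v r| < |tp| ∧ MatchedSmall x u v R σ r) with hK1
  have haK1 : a ∈ K1 := Finset.mem_filter.2 ⟨haR, haH, by
    rw [haeq, cV_red hnp]; exact hap', haM⟩
  obtain ⟨q1, hq1K, hq1max⟩ := K1.exists_max_image (fun r => |cV x u v r|) ⟨a, haK1⟩
  obtain ⟨hq1R, hq1H, hq1lt, hq1M⟩ := Finset.mem_filter.1 hq1K
  obtain ⟨t1, ht10, hq1eq⟩ := hR q1 hq1R
  have hcV1 : cV x u v q1 = t1 := by rw [hq1eq, cV_red hnp]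
  rw [hcV1] at hq1lt
  have ht1δ : 0 < δ * t1 := (mem_halfLine_red hnp hδ).1 (hq1eq ▸ hq1H)
  set K2 : Finset Pt := R.filter (fun r => r ∈ halfLine x (δ • v) ∧
    |t1| < |cV x u v r| ∧ |cV x u v r| ≤ |tp|) with hK2
  have hpK2 : p ∈ K2 := Finset.mem_filter.2 ⟨hpR, hpH, by
    rw [hpeq, cV_red hnp]; exact ⟨hq1lt, le_refl _⟩⟩
  obtain ⟨q2, hq2K, hq2min⟩ := K2.exists_min_image (fun r => |cV x u v r|) ⟨p, hpK2⟩
  obtain ⟨hq2R, hq2H, hq2gt, hq2le⟩ := Finset.mem_filter.1 hq2K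
  obtain ⟨t2, ht20, hq2eq⟩ := hR q2 hq2R
  have hcV2 : cV x u v q2 = t2 := by rw [hq2eq, cV_red hnp]
  rw [hcV2] at hq2gt hq2le
  have ht2δ : 0 < δ * t2 := (mem_halfLine_red hnp hδ).1 (hq2eq ▸ hq2H)
  have hq2M : ¬ MatchedSmall x u v R σ q2 := by
    intro hsm
    have hq2p : q2 ≠ p := fun h => hpM (h ▸ hsm)
    have h2lt : |t2| < |tp| := lt_of_le_of_ne hq2le
      (fun he => hq2p (by rw [hq2eq, hpeq, same_sign_abs_eq (hprod ht2δ htpδ) he]))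
    have : q2 ∈ K1 := Finset.mem_filter.2 ⟨hq2R, hq2H, by rw [hcV2]; exact h2lt, hsm⟩
    have := hq1max q2 this
    rw [hcV1, hcV2] at this
    exact absurd hq2gt (not_lt.2 this)
  obtain ⟨s1, hs10, hq1σ⟩ := hB (σ q1) (hσ.1.mapsTo (Finset.mem_coe.2 hq1R))
  obtain ⟨s2, hs20, hq2σ⟩ := hB (σ q2) (hσ.1.mapsTo (Finset.mem_coe.2 hq2R))
  have hsm1 : 0 < s1 * t1 * ⟪u, v⟫_ℝ := by
    have h1 : InSmallSector x u v (σ q1) q1 := (matched_red hnp hσ hB hR hq1R).1 hq1M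
    rw [hq1σ, hq1eq] at h1
    exact (smallSec_iff hnp hs10 ht10).1 h1
  have hbg2 : s2 * t2 * ⟪u, v⟫_ℝ < 0 := by
    rcases lt_trichotomy (s2 * t2 * ⟪u, v⟫_ℝ) 0 with h | h | h
    · exact h
    · exact absurd h (mul_ne_zero (mul_ne_zero hs20 ht20) hipne)
    · exfalso
      apply hq2M
      apply (matched_red hnp hσ hB hR hq2R).2
      rw [hq2σ, hq2eq]
      exact (smallSec_iff hnp hs20 ht20).2 h
  have hadj : ∀ r ∈ R, ∀ t : ℝ, r = x + t • v → 0 < t * t1 → |t1| < |t| → |t| < |t2| →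
      False := by
    intro r hrR t hreq htt1 hlt1 hlt2
    have hδt : 0 < δ * t := pos_chain ht1δ (mul_comm t t1 ▸ htt1)
    have hrK2 : r ∈ K2 := Finset.mem_filter.2 ⟨hrR, by
      rw [hreq]; exact (mem_halfLine_red hnp hδ).2 hδt, by
      rw [hreq, cV_red hnp]; exact ⟨hlt1, le_trans hlt2.le hq2le⟩⟩
    have := hq2min r hrK2
    rw [hcV2, hreq, cV_red hnp] at this
    exact absurd hlt2 (not_lt.2 this)
  obtain ⟨σ', hσ', hsup, hphi⟩ := swap_red hu hv hnp hRne hσ hB hR hq1R hq2R hcR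
    hq1eq hq1σ hq2eq hq2σ hceq hcσ
    (hprod ht1δ ht2δ) (hprod ht1δ htcδ) hq2gt (lt_of_le_of_lt hq2le hpc')
    hsm1 hbg2 hsmc hadj
  have := hmin2 σ' hσ' hsup
  linarith

end Consec

/-- Let `P = B ∪ R` be a doubly collinear point set with `|B| = |R| = n ≥ 1`.
There exists a bichromatic perfect non-crossing matching minimizing the maximum edge length
such that, for each of the four half-lines, the set of its points whose matching edge lies in a
small sector is consecutive in the ordering by distance to `x`. -/
theorem dc_minmax_structured_optimum (n : ℕ) (hn : 1 ≤ n)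
    (x u v : Pt) (hu : ‖u‖ = 1) (hv : ‖v‖ = 1) (hnp : det2 u v ≠ 0) (B R : Finset Pt)
    (hB : ∀ b ∈ B, ∃ t : ℝ, t ≠ 0 ∧ b = x + t • u)
    (hR : ∀ r ∈ R, ∃ t : ℝ, t ≠ 0 ∧ r = x + t • v)
    (hcB : B.card = n) (hcR : R.card = n) (hRne : R.Nonempty) :
    ∃ σ, IsBM B R σ ∧
      (∀ σ', IsBM B R σ' →
        R.sup' hRne (fun r => dist r (σ r)) ≤ R.sup' hRne (fun r => dist r (σ' r))) ∧
      (∀ w : Pt, (w = u ∨ w = -u ∨ w = v ∨ w = -v) →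
        ConsecOn x (↑B ∪ ↑R) (halfLine x w)
          {p | p ∈ (↑B ∪ ↑R : Set Pt) ∩ halfLine x w ∧ MatchedSmall x u v R σ p}) := by
  classical
  obtain ⟨σe, hσe⟩ := exists_isBM hnp n B R hcB hcR hB hR
  obtain ⟨σ0, hσ0, hmin1, hmin2⟩ := exists_min_matching B R hRne ⟨σe, hσe⟩
  refine ⟨σ0, hσ0, hmin1, ?_⟩
  intro w hw
  rcases hw with rfl | rfl | rfl | rfl
  · have h := consec_blue hu hv hnp hRne hσ0 hB hR hmin2 (ε := 1) (Or.inl rfl)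
    simpa using h
  · have h := consec_blue hu hv hnp hRne hσ0 hB hR hmin2 (ε := -1) (Or.inr rfl)
    simpa using h
  · have h := consec_red hu hv hnp hRne hσ0 hB hR hmin2 (δ := 1) (Or.inl rfl)
    simpa using h
  · have h := consec_red hu hv hnp hRne hσ0 hB hR hmin2 (δ := -1) (Or.inr rfl)
    simpa using h
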